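/- arXiv:2004.09563 — 4 statements merged into one kernel-verified Lean document; each statement's English description precedes it below -/
import Mathlib

section
/- Let x_1, …, x_n be points in ℝ^d, let μ, μ* ∈ ℝ^d, let 1 ≤ m ≤ n, and let S ⊆ {1,…,n} with |S| = m be such that ‖x_i − μ‖₂ ≤ ‖x_j − μ‖₂ for every i ∈ S and j ∉ S (i.e., S consists of m points closest to μ). Then for any subset S* ⊆ {1,…,n} with |S*| = m, the empirical mean μ' = (1/m) Σ_{i∈S} x_i satisfies ‖μ' − μ*‖₂ ≤ (2|S \ S*|/m)·‖μ − μ*‖₂ + (1/m) Σ_{i∈S*} ‖x_i − μ*‖₂. -/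
set_option autoImplicit false

open Finset

theorem stmt2 (n d : ℕ) (x : Fin n → EuclideanSpace ℝ (Fin d))
    (μ μstar : EuclideanSpace ℝ (Fin d)) (m : ℕ) (hm : 1 ≤ m) (hmn : m ≤ n)
    (S : Finset (Fin n)) (hScard : S.card = m)
    (hsel : ∀ i ∈ S, ∀ j ∉ S, ‖x i - μ‖ ≤ ‖x j - μ‖)
    (Sstar : Finset (Fin n)) (hSstar : Sstar.card = m)
    (μ' : EuclideanSpace ℝ (Fin d)) (hμ' : μ' = (m : ℝ)⁻¹ • ∑ i ∈ S, x i) :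
    ‖μ' - μstar‖ ≤ (2 * ((S \ Sstar).card : ℝ) / m) * ‖μ - μstar‖
      + (1 / m) * ∑ i ∈ Sstar, ‖x i - μstar‖ := by
  have hm0 : (m : ℝ) ≠ 0 := by positivity
  have hmpos : (0 : ℝ) < m := by positivity
  set A := S \ Sstar with hA
  set B := Sstar \ S with hB
  have hcard : A.card = B.card := Finset.card_sdiff_comm (hScard.trans hSstar.symm)
  -- matching step
  have key : ∑ i ∈ A, ‖x i - μ‖ ≤ ∑ j ∈ B, ‖x j - μ‖ := by
    have e := Finset.equivOfCardEq hcard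
    rw [← Finset.sum_coe_sort A (fun i => ‖x i - μ‖),
        ← Finset.sum_coe_sort B (fun j => ‖x j - μ‖),
        ← Equiv.sum_comp e (fun j => ‖x (j : Fin n) - μ‖)]
    apply Finset.sum_le_sum
    intro i _
    exact hsel i (Finset.mem_sdiff.mp i.2).1 (e i) (Finset.mem_sdiff.mp (e i).2).2
  have hdiff : μ' - μstar = (m : ℝ)⁻¹ • ∑ i ∈ S, (x i - μstar) := by
    rw [hμ', Finset.sum_sub_distrib, smul_sub, Finset.sum_const, hScard,
      ← Nat.cast_smul_eq_nsmul ℝ m μstar, smul_smul, inv_mul_cancel₀ hm0, one_smul]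
  have h1 : ‖μ' - μstar‖ ≤ (m : ℝ)⁻¹ * ∑ i ∈ S, ‖x i - μstar‖ := by
    rw [hdiff, norm_smul]
    gcongr
    · simp [abs_of_nonneg, hmpos.le]
    · exact norm_sum_le _ _
  have hsplitS : ∑ i ∈ S, ‖x i - μstar‖
      = ∑ i ∈ S ∩ Sstar, ‖x i - μstar‖ + ∑ i ∈ A, ‖x i - μstar‖ :=
    (Finset.sum_inter_add_sum_sdiff S Sstar _).symm
  have hsplitSstar : ∑ i ∈ Sstar, ‖x i - μstar‖
      = ∑ i ∈ S ∩ Sstar, ‖x i - μstar‖ + ∑ i ∈ B, ‖x i - μstar‖ := by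
    rw [Finset.inter_comm]
    exact (Finset.sum_inter_add_sum_sdiff Sstar S _).symm
  have hAbound : ∑ i ∈ A, ‖x i - μstar‖
      ≤ ∑ j ∈ B, ‖x j - μstar‖ + 2 * (A.card : ℝ) * ‖μ - μstar‖ := by
    have h2 : ∑ i ∈ A, ‖x i - μstar‖ ≤ ∑ i ∈ A, (‖x i - μ‖ + ‖μ - μstar‖) := by
      apply Finset.sum_le_sum
      intro i _
      calc ‖x i - μstar‖ = ‖(x i - μ) + (μ - μstar)‖ := by rw [sub_add_sub_cancel]
        _ ≤ ‖x i - μ‖ + ‖μ - μstar‖ := norm_add_le _ _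
    have h3 : ∑ j ∈ B, ‖x j - μ‖ ≤ ∑ j ∈ B, (‖x j - μstar‖ + ‖μ - μstar‖) := by
      apply Finset.sum_le_sum
      intro j _
      calc ‖x j - μ‖ = ‖(x j - μstar) + (μstar - μ)‖ := by rw [sub_add_sub_cancel]
        _ ≤ ‖x j - μstar‖ + ‖μstar - μ‖ := norm_add_le _ _
        _ = ‖x j - μstar‖ + ‖μ - μstar‖ := by rw [norm_sub_rev μstar μ]
    simp only [Finset.sum_add_distrib, Finset.sum_const, nsmul_eq_mul] at h2 h3
    have := key
    rw [← hcard] at h3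
    linarith
  have hSbound : ∑ i ∈ S, ‖x i - μstar‖
      ≤ ∑ i ∈ Sstar, ‖x i - μstar‖ + 2 * (A.card : ℝ) * ‖μ - μstar‖ := by
    rw [hsplitS, hsplitSstar]; linarith
  calc ‖μ' - μstar‖ ≤ (m : ℝ)⁻¹ * ∑ i ∈ S, ‖x i - μstar‖ := h1
    _ ≤ (m : ℝ)⁻¹ * (∑ i ∈ Sstar, ‖x i - μstar‖ + 2 * (A.card : ℝ) * ‖μ - μstar‖) := by
        gcongr
    _ = (2 * ((S \ Sstar).card : ℝ) / m) * ‖μ - μstar‖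
        + (1 / m) * ∑ i ∈ Sstar, ‖x i - μstar‖ := by
        rw [← hA]; field_simp; ring
end

section
/- Let x_1, …, x_n be independent random vectors in ℝ^d with common mean μ* and covariance matrices Σ_1, …, Σ_n, and let λ_(k) denote the k-th smallest value among {λ_max(Σ_i)}_{i=1}^n. Fix α ≥ 4/5. Then with probability at least 1 − 5/(4n), the following holds simultaneously for every μ ∈ ℝ^d: if S is any subset of {1,…,n} of size ⌈αn⌉ minimizing Σ_{i∈S} ‖x_i − μ‖₂² over all subsets of size ⌈αn⌉, and μ' = (1/⌈αn⌉) Σ_{i∈S} x_i, then ‖μ' − μ*‖₂ ≤ (1/2)·‖μ − μ*‖₂ + 2√(d·λ_(⌈αn⌉)). -/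
set_option autoImplicit false

open MeasureTheory ProbabilityTheory Finset
open scoped ENNReal NNReal

/-- The largest eigenvalue of a matrix. -/
noncomputable def lambdaMax {d : ℕ} (M : Matrix (Fin d) (Fin d) ℝ) : ℝ :=
  sSup {r : ℝ | ∃ v : Fin d → ℝ, v ≠ 0 ∧ M.mulVec v = r • v}

/-- `orderStat f k` is the `k`-th smallest (0-indexed) value among `f 0, …, f (n-1)`. -/
noncomputable def orderStat {n : ℕ} (f : Fin n → ℝ) (k : Fin n) : ℝ := f (Tuple.sort f k)

lemma ceil_pred_lt (α : ℝ) (n : ℕ) (hn : 0 < n) (hα1 : α ≤ 1) : ⌈α * (n : ℝ)⌉₊ - 1 < n := by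
  have h : ⌈α * (n : ℝ)⌉₊ ≤ n := by
    rw [Nat.ceil_le]
    calc α * (n : ℝ) ≤ 1 * (n : ℝ) := by nlinarith [Nat.cast_nonneg (α := ℝ) n]
      _ = (n : ℝ) := one_mul _
  omega

set_option maxHeartbeats 1000000

section AuxLemmas

open scoped RealInnerProductSpace

lemma bddAbove_eigSet {d : ℕ} (M : Matrix (Fin d) (Fin d) ℝ) :
    BddAbove {r : ℝ | ∃ v : Fin d → ℝ, v ≠ 0 ∧ M.mulVec v = r • v} := by
  refine ⟨∑ p : Fin d, ∑ q : Fin d, |M p q|, ?_⟩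
  rintro r ⟨v, hv, hMv⟩
  obtain ⟨i₀, hi₀⟩ : ∃ i, v i ≠ 0 := by
    by_contra h
    push_neg at h
    exact hv (funext fun i => h i)
  obtain ⟨j₀, -, hj₀⟩ := Finset.exists_max_image (Finset.univ : Finset (Fin d))
    (fun i => |v i|) ⟨i₀, Finset.mem_univ _⟩
  have hvj₀ : 0 < |v j₀| := lt_of_lt_of_le (abs_pos.2 hi₀) (hj₀ i₀ (Finset.mem_univ _))
  have key : |r| * |v j₀| ≤ (∑ q : Fin d, |M j₀ q|) * |v j₀| := by
    have h1 : |r| * |v j₀| = |(M.mulVec v) j₀| := by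
      rw [hMv]; simp [abs_mul]
    rw [h1]
    have h2 : |(M.mulVec v) j₀| ≤ ∑ q : Fin d, |M j₀ q| * |v q| := by
      simpa [Matrix.mulVec, dotProduct, abs_mul] using
        Finset.abs_sum_le_sum_abs (fun q => M j₀ q * v q) Finset.univ
    refine h2.trans ?_
    rw [Finset.sum_mul]
    exact Finset.sum_le_sum fun q _ =>
      mul_le_mul_of_nonneg_left (hj₀ q (Finset.mem_univ _)) (abs_nonneg _)
  have hr : |r| ≤ ∑ q : Fin d, |M j₀ q| := le_of_mul_le_mul_right key hvj₀
  calc r ≤ |r| := le_abs_self r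
    _ ≤ ∑ q : Fin d, |M j₀ q| := hr
    _ ≤ ∑ p : Fin d, ∑ q : Fin d, |M p q| :=
        Finset.single_le_sum (f := fun p => ∑ q : Fin d, |M p q|)
          (fun p _ => Finset.sum_nonneg fun q _ => abs_nonneg _) (Finset.mem_univ j₀)

noncomputable def toEuc {d : ℕ} (x : Fin d → ℝ) : EuclideanSpace ℝ (Fin d) :=
  (WithLp.equiv 2 (Fin d → ℝ)).symm x

noncomputable def fromEuc {d : ℕ} (x : EuclideanSpace ℝ (Fin d)) : Fin d → ℝ :=
  WithLp.equiv 2 (Fin d → ℝ) x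

@[simp] lemma toEuc_apply {d : ℕ} (x : Fin d → ℝ) (i : Fin d) : toEuc x i = x i := rfl

@[simp] lemma fromEuc_apply {d : ℕ} (x : EuclideanSpace ℝ (Fin d)) (i : Fin d) :
  fromEuc x i = x i := rfl

lemma euc_inner_eq_sum {d : ℕ} (x y : EuclideanSpace ℝ (Fin d)) :
    ⟪x, y⟫ = ∑ i, x i * y i := by
  simp [PiLp.inner_apply, RCLike.inner_apply, starRingEnd_apply]
  exact Finset.sum_congr rfl fun i _ => mul_comm _ _

lemma inner_mulVec_symm {d : ℕ} {M : Matrix (Fin d) (Fin d) ℝ} (hM : M.IsHermitian)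
    (v w : EuclideanSpace ℝ (Fin d)) :
    ⟪toEuc (M.mulVec (fromEuc v)), w⟫ = ⟪v, toEuc (M.mulVec (fromEuc w))⟫ := by
  have hsymm : ∀ p q, M p q = M q p := by
    intro p q
    have h := congrFun (congrFun hM p) q
    simp only [Matrix.conjTranspose_apply, star_trivial] at h
    exact h.symm
  rw [euc_inner_eq_sum, euc_inner_eq_sum]
  have lhs : ∀ i : Fin d, toEuc (M.mulVec (fromEuc v)) i * w i = ∑ q, M i q * v q * w i := by
    intro i
    rw [toEuc_apply]
    simp [Matrix.mulVec, dotProduct, Finset.sum_mul]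
  have rhs : ∀ i : Fin d, v i * toEuc (M.mulVec (fromEuc w)) i = ∑ q, v i * (M i q * w q) := by
    intro i
    rw [toEuc_apply]
    simp [Matrix.mulVec, dotProduct, Finset.mul_sum]
  simp only [lhs, rhs]
  rw [Finset.sum_comm]
  refine Finset.sum_congr rfl fun i _ => Finset.sum_congr rfl fun q _ => ?_
  rw [hsymm q i]; ring

lemma diag_le_lambdaMax {d : ℕ} {M : Matrix (Fin d) (Fin d) ℝ} (hM : M.IsHermitian) (j : Fin d) :
    M j j ≤ lambdaMax M := by
  classical
  set e : EuclideanSpace ℝ (Fin d) := EuclideanSpace.single j (1 : ℝ) with he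
  set b := hM.eigenvectorBasis with hb
  have hMe : M j j = ⟪e, toEuc (M.mulVec (fromEuc e))⟫ := by
    rw [euc_inner_eq_sum]
    rw [Finset.sum_eq_single j]
    · have h3 : toEuc (M.mulVec (fromEuc e)) j = M j j := by
        rw [toEuc_apply]
        simp only [Matrix.mulVec, dotProduct]
        rw [Finset.sum_eq_single j]
        · simp [he, EuclideanSpace.single_apply]
        · intro q _ hq
          have hq0 : e q = 0 := by simp [he, EuclideanSpace.single_apply, hq]
          rw [show fromEuc e q = e q from rfl, hq0, mul_zero]
        · simp
      rw [h3]
      simp [he, EuclideanSpace.single_apply]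
    · intro i _ hij
      have : e i = 0 := by simp [he, EuclideanSpace.single_apply, hij]
      rw [this, zero_mul]
    · simp
  have expand := b.sum_inner_mul_inner e (toEuc (M.mulVec (fromEuc e)))
  have eig : ∀ i, ⟪b i, toEuc (M.mulVec (fromEuc e))⟫ = hM.eigenvalues i * ⟪b i, e⟫ := by
    intro i
    rw [← inner_mulVec_symm hM (b i) e]
    have h2 : toEuc (M.mulVec (fromEuc (b i))) = hM.eigenvalues i • (b i) := by
      rw [toEuc, Equiv.symm_apply_eq]
      exact hM.mulVec_eigenvectorBasis i
    rw [h2, real_inner_smul_left]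
  have hle : ∀ i, hM.eigenvalues i ≤ lambdaMax M := by
    intro i
    apply le_csSup (bddAbove_eigSet M)
    refine ⟨⇑(b i), ?_, hM.mulVec_eigenvectorBasis i⟩
    intro h0
    have h1 : ‖b i‖ = 1 := b.orthonormal.1 i
    have h4 : (b i : EuclideanSpace ℝ (Fin d)) = 0 := by
      ext t
      exact congrFun h0 t
    rw [h4] at h1
    simp at h1
  have hsum1 : ∑ i, ⟪b i, e⟫ * ⟪b i, e⟫ = 1 := by
    have h1 : ∑ i, ⟪e, b i⟫ * ⟪b i, e⟫ = ⟪e, e⟫ := b.sum_inner_mul_inner e e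
    have h2 : ∑ i, ⟪b i, e⟫ * ⟪b i, e⟫ = ∑ i, ⟪e, b i⟫ * ⟪b i, e⟫ :=
      Finset.sum_congr rfl fun i _ => by rw [real_inner_comm e (b i)]
    rw [h2, h1, real_inner_self_eq_norm_sq]
    have : ‖e‖ = 1 := by rw [he]; simp [EuclideanSpace.norm_single]
    rw [this]; norm_num
  calc M j j = ⟪e, toEuc (M.mulVec (fromEuc e))⟫ := hMe
    _ = ∑ i, ⟪e, b i⟫ * ⟪b i, toEuc (M.mulVec (fromEuc e))⟫ := expand.symm
    _ = ∑ i, hM.eigenvalues i * (⟪b i, e⟫ * ⟪b i, e⟫) := by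
        refine Finset.sum_congr rfl fun i _ => ?_
        rw [eig i, real_inner_comm e (b i)]; ring
    _ ≤ ∑ i, lambdaMax M * (⟪b i, e⟫ * ⟪b i, e⟫) := by
        refine Finset.sum_le_sum fun i _ => ?_
        exact mul_le_mul_of_nonneg_right (hle i) (mul_self_nonneg _)
    _ = lambdaMax M := by
        rw [← Finset.mul_sum, hsum1, mul_one]

lemma euc_coord_abs_le_norm {d : ℕ} (v : EuclideanSpace ℝ (Fin d)) (j : Fin d) :
    |v j| ≤ ‖v‖ := by
  have h1 : ‖v‖ = Real.sqrt (∑ i, ‖v i‖ ^ 2) := EuclideanSpace.norm_eq v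
  have h2 : |v j| = Real.sqrt (‖v j‖ ^ 2) := by
    rw [Real.sqrt_sq_eq_abs, Real.norm_eq_abs, abs_abs]
  rw [h1, h2]
  apply Real.sqrt_le_sqrt
  exact Finset.single_le_sum (f := fun i => ‖v i‖ ^ 2) (fun i _ => sq_nonneg _)
    (Finset.mem_univ j)

lemma euc_norm_sq_eq_sum {d : ℕ} (v : EuclideanSpace ℝ (Fin d)) :
    ‖v‖ ^ 2 = ∑ j, (v j) ^ 2 := by
  rw [EuclideanSpace.norm_eq v, Real.sq_sqrt (Finset.sum_nonneg fun i _ => sq_nonneg _)]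
  exact Finset.sum_congr rfl fun j _ => by rw [Real.norm_eq_abs, sq_abs]

lemma det_lemma {n d : ℕ} {k : ℕ} (hk : 0 < k)
    (x : Fin n → EuclideanSpace ℝ (Fin d)) (μ μs : EuclideanSpace ℝ (Fin d))
    (T S : Finset (Fin n)) (hT : T.card = k) (hS : S.card = k)
    (hmin : ∀ S' : Finset (Fin n), S'.card = k →
      ∑ i ∈ S, ‖x i - μ‖ ^ 2 ≤ ∑ i ∈ S', ‖x i - μ‖ ^ 2)
    (hp4 : 4 * (S \ T).card ≤ k)
    {C : ℝ} (hZ : ∑ i ∈ T, ‖x i - μs‖ ≤ C) :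
    ‖(k : ℝ)⁻¹ • (∑ i ∈ S, x i) - μs‖ ≤ 1 / 2 * ‖μ - μs‖ + (k : ℝ)⁻¹ * C := by
  classical
  have hkR : (0 : ℝ) < (k : ℝ) := by exact_mod_cast hk
  set m : ℝ := ‖μ - μs‖ with hm
  have hm0 : 0 ≤ m := norm_nonneg _
  -- pointwise comparison from minimality
  have point : ∀ i ∈ S, ∀ j, j ∉ S → ‖x i - μ‖ ≤ ‖x j - μ‖ := by
    intro i hi j hj
    have hjS : j ∉ S.erase i := fun h => hj (Finset.mem_of_mem_erase h)
    have hcard : (insert j (S.erase i)).card = k := by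
      rw [Finset.card_insert_of_notMem hjS, Finset.card_erase_of_mem hi, hS]
      omega
    have h2 := hmin _ hcard
    rw [Finset.sum_insert hjS, Finset.sum_erase_eq_sub hi] at h2
    have h3 : ‖x i - μ‖ ^ 2 ≤ ‖x j - μ‖ ^ 2 := by linarith
    nlinarith [norm_nonneg (x i - μ), norm_nonneg (x j - μ)]
  -- decomposition of the sum over S
  have hsplitS : ∑ i ∈ S \ T, ‖x i - μs‖ + ∑ i ∈ S ∩ T, ‖x i - μs‖
      = ∑ i ∈ S, ‖x i - μs‖ := by
    rw [← Finset.sdiff_inter_self_left S T]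
    exact Finset.sum_sdiff (Finset.inter_subset_left)
  have hsplitT : ∑ i ∈ T \ S, ‖x i - μs‖ + ∑ i ∈ T ∩ S, ‖x i - μs‖
      = ∑ i ∈ T, ‖x i - μs‖ := by
    rw [← Finset.sdiff_inter_self_left T S]
    exact Finset.sum_sdiff (Finset.inter_subset_left)
  have hcard_eq : (S \ T).card = (T \ S).card :=
    Finset.card_sdiff_comm (hS.trans hT.symm)
  set p : ℕ := (S \ T).card with hp
  -- main bound on the sum over S
  have hsum : ∑ i ∈ S, ‖x i - μs‖ ≤ C + (k : ℝ) / 2 * m := by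
    rcases Finset.eq_empty_or_nonempty (S \ T) with hSd | hSd
    · have h1 : ∑ i ∈ S, ‖x i - μs‖ = ∑ i ∈ S ∩ T, ‖x i - μs‖ := by
        rw [← hsplitS, hSd]
        simp
      have h2 : ∑ i ∈ S ∩ T, ‖x i - μs‖ ≤ ∑ i ∈ T, ‖x i - μs‖ :=
        Finset.sum_le_sum_of_subset_of_nonneg (Finset.inter_subset_right)
          (fun _ _ _ => norm_nonneg _)
      have : 0 ≤ (k : ℝ) / 2 * m := by positivity
      linarith
    · have hTd : (T \ S).Nonempty := by
        rw [← Finset.card_pos, ← hcard_eq, Finset.card_pos]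
        exact hSd
      obtain ⟨j₀, hj₀T, hj₀min⟩ :=
        Finset.exists_min_image (T \ S) (fun j => ‖x j - μs‖) hTd
      have hj₀S : j₀ ∉ S := (Finset.mem_sdiff.1 hj₀T).2
      -- each grabbed point is bounded
      have hgrab : ∀ i ∈ S \ T, ‖x i - μs‖ ≤ ‖x j₀ - μs‖ + 2 * m := by
        intro i hi
        have hiS : i ∈ S := (Finset.mem_sdiff.1 hi).1
        have t1 : ‖x i - μs‖ ≤ ‖x i - μ‖ + m := by
          have : x i - μs = (x i - μ) + (μ - μs) := by abel
          rw [this]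
          exact norm_add_le _ _
        have t2 : ‖x i - μ‖ ≤ ‖x j₀ - μ‖ := point i hiS j₀ hj₀S
        have t3 : ‖x j₀ - μ‖ ≤ ‖x j₀ - μs‖ + m := by
          have : x j₀ - μ = (x j₀ - μs) + (μs - μ) := by abel
          rw [this]
          have := norm_add_le (x j₀ - μs) (μs - μ)
          rw [norm_sub_rev μs μ] at this
          linarith
        linarith
      have hgs : ∑ i ∈ S \ T, ‖x i - μs‖ ≤ (p : ℝ) * (‖x j₀ - μs‖ + 2 * m) := by
        calc ∑ i ∈ S \ T, ‖x i - μs‖ ≤ ∑ _i ∈ S \ T, (‖x j₀ - μs‖ + 2 * m) :=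
              Finset.sum_le_sum hgrab
          _ = (p : ℝ) * (‖x j₀ - μs‖ + 2 * m) := by
              rw [Finset.sum_const, hp, nsmul_eq_mul]
      have hmin_sum : (p : ℝ) * ‖x j₀ - μs‖ ≤ ∑ j ∈ T \ S, ‖x j - μs‖ := by
        have : ∑ _j ∈ T \ S, ‖x j₀ - μs‖ ≤ ∑ j ∈ T \ S, ‖x j - μs‖ :=
          Finset.sum_le_sum fun j hj => hj₀min j hj
        calc (p : ℝ) * ‖x j₀ - μs‖ = ∑ _j ∈ T \ S, ‖x j₀ - μs‖ := by
              rw [Finset.sum_const, ← hcard_eq, hp, nsmul_eq_mul]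
          _ ≤ _ := this
      have hinter : ∑ i ∈ S ∩ T, ‖x i - μs‖ = ∑ i ∈ T ∩ S, ‖x i - μs‖ := by
        rw [Finset.inter_comm]
      have hTbound : ∑ j ∈ T \ S, ‖x j - μs‖ + ∑ i ∈ S ∩ T, ‖x i - μs‖ ≤ C := by
        rw [hinter, hsplitT]; exact hZ
      have hpm : (p : ℝ) * (2 * m) ≤ (k : ℝ) / 2 * m := by
        have hp4R : 4 * (p : ℝ) ≤ (k : ℝ) := by exact_mod_cast hp4
        nlinarith
      calc ∑ i ∈ S, ‖x i - μs‖
          = ∑ i ∈ S \ T, ‖x i - μs‖ + ∑ i ∈ S ∩ T, ‖x i - μs‖ := hsplitS.symm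
        _ ≤ (p : ℝ) * (‖x j₀ - μs‖ + 2 * m) + ∑ i ∈ S ∩ T, ‖x i - μs‖ := by linarith
        _ = (p : ℝ) * ‖x j₀ - μs‖ + (p : ℝ) * (2 * m) + ∑ i ∈ S ∩ T, ‖x i - μs‖ := by ring_nf
        _ ≤ ∑ j ∈ T \ S, ‖x j - μs‖ + (p : ℝ) * (2 * m) + ∑ i ∈ S ∩ T, ‖x i - μs‖ := by
            linarith
        _ ≤ C + (k : ℝ) / 2 * m := by linarith
  -- rewrite the average
  have havg : (k : ℝ)⁻¹ • (∑ i ∈ S, x i) - μs = (k : ℝ)⁻¹ • (∑ i ∈ S, (x i - μs)) := by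
    rw [Finset.sum_sub_distrib, smul_sub]
    congr 1
    rw [Finset.sum_const, hS, ← Nat.cast_smul_eq_nsmul ℝ, smul_smul,
      inv_mul_cancel₀ (ne_of_gt hkR), one_smul]
  rw [havg, norm_smul]
  have hns : ‖∑ i ∈ S, (x i - μs)‖ ≤ C + (k : ℝ) / 2 * m :=
    le_trans (norm_sum_le _ _) hsum
  have hC0 : 0 ≤ ‖∑ i ∈ S, (x i - μs)‖ := norm_nonneg _
  have : ‖(k : ℝ)⁻¹‖ = (k : ℝ)⁻¹ := by
    rw [Real.norm_eq_abs, abs_of_pos (by positivity)]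
  rw [this]
  calc (k : ℝ)⁻¹ * ‖∑ i ∈ S, (x i - μs)‖ ≤ (k : ℝ)⁻¹ * (C + (k : ℝ) / 2 * m) := by
        exact mul_le_mul_of_nonneg_left hns (by positivity)
    _ = 1 / 2 * m + (k : ℝ)⁻¹ * C := by
        field_simp
        ring

end AuxLemmas

theorem stmt3 {Ω : Type*} [MeasurableSpace Ω] (P : Measure Ω) [IsProbabilityMeasure P]
    (n d : ℕ) (hn : 0 < n)
    (X : Fin n → Ω → EuclideanSpace ℝ (Fin d))
    (μstar : EuclideanSpace ℝ (Fin d)) (Sigm : Fin n → Matrix (Fin d) (Fin d) ℝ)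
    (hindep : iIndepFun X P)
    (hL2 : ∀ i, MemLp (X i) 2 P)
    (hmean : ∀ i, ∫ ω, X i ω ∂P = μstar)
    (hcov : ∀ i, ∀ j k : Fin d,
      Sigm i j k = ∫ ω, (X i ω j - μstar j) * (X i ω k - μstar k) ∂P)
    (α : ℝ) (hα : 4 / 5 ≤ α) (hα1 : α ≤ 1) :
    P {ω | ∀ μ : EuclideanSpace ℝ (Fin d), ∀ S : Finset (Fin n),
        S.card = ⌈α * (n : ℝ)⌉₊ →
        (∀ S' : Finset (Fin n), S'.card = ⌈α * (n : ℝ)⌉₊ →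
          ∑ i ∈ S, ‖X i ω - μ‖ ^ 2 ≤ ∑ i ∈ S', ‖X i ω - μ‖ ^ 2) →
        ‖(⌈α * (n : ℝ)⌉₊ : ℝ)⁻¹ • (∑ i ∈ S, X i ω) - μstar‖
          ≤ (1 / 2) * ‖μ - μstar‖
            + 2 * Real.sqrt (d * orderStat (fun i => lambdaMax (Sigm i))
                ⟨⌈α * (n : ℝ)⌉₊ - 1, ceil_pred_lt α n hn hα1⟩)}
      ≥ 1 - 5 / (4 * (n : ℝ≥0∞)) := by
  classical
  set k : ℕ := ⌈α * (n : ℝ)⌉₊ with hkdef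
  -- basic facts about k
  have hk1 : 1 ≤ k := by
    rw [hkdef, Nat.one_le_ceil_iff]
    have : (0:ℝ) < (n:ℝ) := by exact_mod_cast hn
    nlinarith
  have hkn : k ≤ n := by
    rw [hkdef, Nat.ceil_le]
    calc α * (n : ℝ) ≤ 1 * (n : ℝ) := by nlinarith [Nat.cast_nonneg (α := ℝ) n]
      _ = (n : ℝ) := one_mul _
  have h4n5k : 4 * n ≤ 5 * k := by
    have h1 : α * (n:ℝ) ≤ (k:ℝ) := by rw [hkdef]; exact Nat.le_ceil _
    have h2 : (4:ℝ) * n ≤ 5 * k := by nlinarith [Nat.cast_nonneg (α := ℝ) n]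
    exact_mod_cast h2
  have hkR : (0:ℝ) < (k:ℝ) := by exact_mod_cast hk1
  -- the sorted eigenvalue bound
  set f : Fin n → ℝ := fun i => lambdaMax (Sigm i) with hf
  set lam : ℝ := orderStat f ⟨k - 1, ceil_pred_lt α n hn hα1⟩ with hlam
  set σ : ℝ := Real.sqrt ((d : ℝ) * lam) with hσ
  have hσ0 : 0 ≤ σ := Real.sqrt_nonneg _
  -- the set T of k indices with smallest lambdaMax
  set sp := Tuple.sort f with hsp
  set emb : Fin k ↪ Fin n :=
    ⟨fun j => sp (Fin.castLE hkn j), fun a b hab => by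
      have h1 := sp.injective hab
      exact (Fin.strictMono_castLE hkn).injective h1⟩ with hemb
  set T : Finset (Fin n) := Finset.map emb Finset.univ with hT
  have hTcard : T.card = k := by
    rw [hT, Finset.card_map, Finset.card_univ, Fintype.card_fin]
  have hTlam : ∀ i ∈ T, lambdaMax (Sigm i) ≤ lam := by
    intro i hi
    rw [hT, Finset.mem_map] at hi
    obtain ⟨j, -, hj⟩ := hi
    have hj' : emb j = i := hj
    have hle : Fin.castLE hkn j ≤ (⟨k - 1, ceil_pred_lt α n hn hα1⟩ : Fin n) := by
      have : (j : ℕ) < k := j.2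
      simp only [Fin.le_def, Fin.coe_castLE]
      omega
    have := Tuple.monotone_sort f hle
    simp only [Function.comp_apply] at this
    rw [← hj']
    exact this
  have hTne : T.Nonempty := by
    rw [← Finset.card_pos, hTcard]; omega
  -- the random variables Z i = ‖X i - μstar‖
  set Z : Fin n → Ω → ℝ := fun i ω => ‖X i ω - μstar‖ with hZ
  have hZmem : ∀ i, MemLp (Z i) 2 P := fun i => ((hL2 i).sub (memLp_const μstar)).norm
  have hZnn : ∀ i ω, 0 ≤ Z i ω := fun i ω => norm_nonneg _
  -- second moment bound
  have hherm : ∀ i, (Sigm i).IsHermitian := by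
    intro i
    refine Matrix.IsHermitian.ext fun p q => ?_
    rw [hcov i p q, hcov i q p]
    simp only [star_trivial]
    exact integral_congr_ae (Filter.Eventually.of_forall fun ω => by ring)
  have hZsq : ∀ i ∈ T, ∫ ω, (Z i ω) ^ 2 ∂P ≤ (d:ℝ) * lam := by
    intro i hi
    have hWmem : ∀ j : Fin d, MemLp (fun ω => X i ω j - μstar j) 2 P := by
      intro j
      refine MemLp.of_le (hZmem i) ?_ ?_
      · have h1 : AEStronglyMeasurable (X i) P := (hL2 i).1
        have h2 : AEStronglyMeasurable (fun ω => (X i ω) j) P :=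
          ((EuclideanSpace.proj (𝕜 := ℝ) j).continuous.comp_aestronglyMeasurable h1)
        exact h2.sub aestronglyMeasurable_const
      · refine Filter.Eventually.of_forall fun ω => ?_
        have := euc_coord_abs_le_norm (X i ω - μstar) j
        have h3 : (X i ω - μstar) j = X i ω j - μstar j := rfl
        rw [h3] at this
        simpa [Real.norm_eq_abs, hZ, abs_of_nonneg (hZnn i ω)] using this
    have hint : ∀ j : Fin d, Integrable (fun ω => (X i ω j - μstar j) ^ 2) P :=
      fun j => (hWmem j).integrable_sq
    have hsq : ∀ ω, (Z i ω) ^ 2 = ∑ j, (X i ω j - μstar j) ^ 2 := by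
      intro ω
      rw [hZ]
      have := euc_norm_sq_eq_sum (X i ω - μstar)
      simpa using this
    have hZint : ∫ ω, (Z i ω) ^ 2 ∂P = ∑ j, Sigm i j j := by
      rw [integral_congr_ae (Filter.Eventually.of_forall hsq),
        integral_finset_sum _ (fun j _ => hint j)]
      refine Finset.sum_congr rfl fun j _ => ?_
      rw [hcov i j j]
      exact integral_congr_ae (Filter.Eventually.of_forall fun ω => by ring)
    rw [hZint]
    calc ∑ j, Sigm i j j ≤ ∑ _j : Fin d, lambdaMax (Sigm i) :=
          Finset.sum_le_sum fun j _ => diag_le_lambdaMax (hherm i) j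
      _ = (d:ℝ) * lambdaMax (Sigm i) := by
          rw [Finset.sum_const, Finset.card_univ, Fintype.card_fin, nsmul_eq_mul]
      _ ≤ (d:ℝ) * lam := by
          have := hTlam i hi
          have hd0 : (0:ℝ) ≤ (d:ℝ) := Nat.cast_nonneg d
          nlinarith
  -- d * lam is nonnegative
  have hdlam0 : 0 ≤ (d:ℝ) * lam := by
    obtain ⟨i₀, hi₀⟩ := hTne
    have h1 := hZsq i₀ hi₀
    have h2 : 0 ≤ ∫ ω, (Z i₀ ω) ^ 2 ∂P := integral_nonneg fun ω => sq_nonneg _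
    linarith
  have hσsq : σ ^ 2 = (d:ℝ) * lam := Real.sq_sqrt hdlam0
  -- means
  set a : Fin n → ℝ := fun i => ∫ ω, Z i ω ∂P with ha
  have ha0 : ∀ i, 0 ≤ a i := fun i => integral_nonneg (hZnn i)
  have hEsq : ∀ i, P[Z i ^ 2] = ∫ ω, (Z i ω) ^ 2 ∂P := by
    intro i
    refine integral_congr_ae (Filter.Eventually.of_forall fun ω => ?_)
    simp
  have haσ : ∀ i ∈ T, a i ≤ σ := by
    intro i hi
    have hvar := variance_nonneg (Z i) P
    have hdef := variance_eq_sub (hZmem i)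
    rw [hEsq i] at hdef
    have h2 := hZsq i hi
    nlinarith [ha0 i, hσ0, hσsq]
  have hvarle : ∀ i ∈ T, variance (Z i) P ≤ σ ^ 2 - (a i) ^ 2 := by
    intro i hi
    have hdef := variance_eq_sub (hZmem i)
    rw [hEsq i] at hdef
    have h2 := hZsq i hi
    rw [hdef]
    have : P[Z i] = a i := rfl
    rw [this]
    linarith [hσsq]
  -- the sum of the Z over T
  set ZT : Ω → ℝ := ∑ i ∈ T, Z i with hZT
  have hZTmem : MemLp ZT 2 P := memLp_finset_sum' T (fun i _ => hZmem i)
  have hZTapply : ∀ ω, ZT ω = ∑ i ∈ T, Z i ω := fun ω => by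
    rw [hZT]; simp [Finset.sum_apply]
  -- independence
  have hZind : iIndepFun Z P := by
    have hg : ∀ _i : Fin n, Measurable (fun x : EuclideanSpace ℝ (Fin d) => ‖x - μstar‖) :=
      fun _ => (measurable_id.sub measurable_const).norm
    exact hindep.comp _ hg
  have hpair : Set.Pairwise (T : Set (Fin n)) fun i j => IndepFun (Z i) (Z j) P :=
    fun i _ j _ hij => hZind.indepFun hij
  have hvarsum : variance ZT P = ∑ i ∈ T, variance (Z i) P := by
    rw [hZT]
    exact IndepFun.variance_sum (fun i _ => hZmem i) hpair
  have hEZT : P[ZT] = ∑ i ∈ T, a i := by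
    rw [hZT]
    have h1 : P[∑ i ∈ T, Z i] = ∫ ω, ∑ i ∈ T, Z i ω ∂P := by
      refine integral_congr_ae (Filter.Eventually.of_forall fun ω => ?_)
      simp [Finset.sum_apply]
    rw [h1, integral_finset_sum _ (fun i _ => (hZmem i).integrable one_le_two)]
  set A : ℝ := ∑ i ∈ T, a i with hA
  have hA0 : 0 ≤ A := Finset.sum_nonneg fun i _ => ha0 i
  have hAkσ : A ≤ (k:ℝ) * σ := by
    calc A ≤ ∑ _i ∈ T, σ := Finset.sum_le_sum haσ
      _ = (k:ℝ) * σ := by rw [Finset.sum_const, hTcard, nsmul_eq_mul]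
  set D : ℝ := (k:ℝ) * σ - A with hD
  have hD0 : 0 ≤ D := by rw [hD]; linarith
  have hVar2 : variance ZT P ≤ 2 * σ * D := by
    rw [hvarsum]
    calc ∑ i ∈ T, variance (Z i) P ≤ ∑ i ∈ T, (σ ^ 2 - (a i) ^ 2) :=
          Finset.sum_le_sum hvarle
      _ ≤ ∑ i ∈ T, 2 * σ * (σ - a i) := by
          refine Finset.sum_le_sum fun i hi => ?_
          have h1 := haσ i hi
          have h2 := ha0 i
          nlinarith
      _ = 2 * σ * D := by
          rw [← Finset.mul_sum, Finset.sum_sub_distrib, Finset.sum_const, hTcard,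
            nsmul_eq_mul, hD, hA]
  -- the bad event
  have hofReal : ENNReal.ofReal (5 / (4 * (n:ℝ))) ≤ 5 / (4 * (n : ℝ≥0∞)) := by
    have hn4 : (0:ℝ) < 4 * (n:ℝ) := by positivity
    rw [ENNReal.ofReal_div_of_pos hn4, ENNReal.ofReal_mul (by norm_num : (0:ℝ) ≤ 4)]
    rw [ENNReal.ofReal_natCast]
    norm_num
  have hbad : P {ω | ¬ (∑ i ∈ T, Z i ω ≤ 2 * (k:ℝ) * σ)} ≤ 5 / (4 * (n : ℝ≥0∞)) := by
    by_cases hσpos : 0 < σ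
    · -- Chebyshev's inequality
      set t : ℝ := 2 * (k:ℝ) * σ - A with ht
      have htpos : 0 < t := by
        rw [ht]
        nlinarith
      have hsub : {ω | ¬ (∑ i ∈ T, Z i ω ≤ 2 * (k:ℝ) * σ)}
          ⊆ {ω | t ≤ |ZT ω - P[ZT]|} := by
        intro ω hω
        simp only [Set.mem_setOf_eq, not_le] at hω ⊢
        rw [hEZT, hZTapply ω]
        calc t ≤ (∑ i ∈ T, Z i ω) - A := by rw [ht]; linarith
          _ ≤ |(∑ i ∈ T, Z i ω) - A| := le_abs_self _
      have hcheb := meas_ge_le_variance_div_sq hZTmem htpos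
      have hreal : variance ZT P / t ^ 2 ≤ 5 / (4 * (n:ℝ)) := by
        have hvnn := variance_nonneg ZT P
        have h1 : variance ZT P / t ^ 2 ≤ 1 / (2 * (k:ℝ)) := by
          rw [div_le_div_iff₀ (by positivity) (by positivity)]
          have ht2 : t = (k:ℝ) * σ + D := by rw [ht, hD]; ring
          nlinarith [sq_nonneg ((k:ℝ) * σ - D), hD0, hσ0, hVar2]
        have h2 : 1 / (2 * (k:ℝ)) ≤ 5 / (4 * (n:ℝ)) := by
          rw [div_le_div_iff₀ (by positivity) (by positivity)]
          have h3 : (4:ℝ) * n ≤ 5 * k := by exact_mod_cast h4n5k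
          nlinarith
        linarith
      calc P {ω | ¬ (∑ i ∈ T, Z i ω ≤ 2 * (k:ℝ) * σ)}
          ≤ P {ω | t ≤ |ZT ω - P[ZT]|} := measure_mono hsub
        _ ≤ ENNReal.ofReal (variance ZT P / t ^ 2) := hcheb
        _ ≤ ENNReal.ofReal (5 / (4 * (n:ℝ))) := ENNReal.ofReal_le_ofReal hreal
        _ ≤ 5 / (4 * (n : ℝ≥0∞)) := hofReal
    · -- degenerate case: σ = 0, all Z i vanish a.e.
      have hσe : σ = 0 := le_antisymm (not_lt.1 hσpos) hσ0
      have hdlam : (d:ℝ) * lam = 0 := by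
        rw [← hσsq, hσe]; ring
      have hzero : ∀ i ∈ T, Z i =ᵐ[P] 0 := by
        intro i hi
        have h1 : ∫ ω, (Z i ω) ^ 2 ∂P ≤ 0 := by
          have := hZsq i hi
          rw [hdlam] at this
          exact this
        have h2 : ∫ ω, (Z i ω) ^ 2 ∂P = 0 :=
          le_antisymm h1 (integral_nonneg fun ω => sq_nonneg _)
        have h3 : (fun ω => (Z i ω) ^ 2) =ᵐ[P] 0 := by
          rw [← integral_eq_zero_iff_of_nonneg (fun ω => sq_nonneg _)
            (hZmem i).integrable_sq]
          exact h2
        filter_upwards [h3] with ω hω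
        have h4 : (Z i ω) ^ 2 = 0 := hω
        have h5 : Z i ω = 0 := by
          have := sq_eq_zero_iff.1 h4
          exact this
        exact h5
      have hsum0 : ∀ᵐ ω ∂P, ∑ i ∈ T, Z i ω = 0 := by
        have h6 : ∀ᵐ ω ∂P, ∀ i ∈ T, Z i ω = 0 := by
          rw [Filter.eventually_all_finset T]
          intro i hi
          exact hzero i hi
        filter_upwards [h6] with ω hω
        exact Finset.sum_eq_zero hω
      have hsub : {ω | ¬ (∑ i ∈ T, Z i ω ≤ 2 * (k:ℝ) * σ)}
          ⊆ {ω | ¬ (∑ i ∈ T, Z i ω = 0)} := by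
        intro ω hω
        simp only [Set.mem_setOf_eq] at hω ⊢
        intro h0
        apply hω
        rw [h0, hσe]
        norm_num
      have hnull : P {ω | ¬ (∑ i ∈ T, Z i ω = 0)} = 0 := hsum0
      calc P {ω | ¬ (∑ i ∈ T, Z i ω ≤ 2 * (k:ℝ) * σ)}
          ≤ P {ω | ¬ (∑ i ∈ T, Z i ω = 0)} := measure_mono hsub
        _ = 0 := hnull
        _ ≤ 5 / (4 * (n : ℝ≥0∞)) := zero_le'
  -- the deterministic implication
  have hdet : ∀ ω, (∑ i ∈ T, Z i ω ≤ 2 * (k:ℝ) * σ) →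
      ∀ μ : EuclideanSpace ℝ (Fin d), ∀ S : Finset (Fin n),
        S.card = k →
        (∀ S' : Finset (Fin n), S'.card = k →
          ∑ i ∈ S, ‖X i ω - μ‖ ^ 2 ≤ ∑ i ∈ S', ‖X i ω - μ‖ ^ 2) →
        ‖(k : ℝ)⁻¹ • (∑ i ∈ S, X i ω) - μstar‖
          ≤ (1 / 2) * ‖μ - μstar‖ + 2 * σ := by
    intro ω hω μ S hScard hmin
    have hp4 : 4 * (S \ T).card ≤ k := by
      have hsub : S \ T ⊆ Finset.univ \ T :=
        Finset.sdiff_subset_sdiff (Finset.subset_univ S) le_rfl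
      have h1 := Finset.card_le_card hsub
      rw [Finset.card_sdiff_of_subset (Finset.subset_univ T), Finset.card_univ,
        Fintype.card_fin, hTcard] at h1
      omega
    have hdl := det_lemma (show 0 < k by omega) (fun i => X i ω) μ μstar T S hTcard
      hScard hmin hp4 (C := 2 * (k:ℝ) * σ) hω
    calc ‖(k : ℝ)⁻¹ • (∑ i ∈ S, X i ω) - μstar‖
        ≤ 1 / 2 * ‖μ - μstar‖ + (k:ℝ)⁻¹ * (2 * (k:ℝ) * σ) := hdl
      _ = (1 / 2) * ‖μ - μstar‖ + 2 * σ := by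
          have hne : (k:ℝ) ≠ 0 := ne_of_gt hkR
          field_simp
  -- put everything together
  set G : Set Ω := {ω | ∀ μ : EuclideanSpace ℝ (Fin d), ∀ S : Finset (Fin n),
        S.card = k →
        (∀ S' : Finset (Fin n), S'.card = k →
          ∑ i ∈ S, ‖X i ω - μ‖ ^ 2 ≤ ∑ i ∈ S', ‖X i ω - μ‖ ^ 2) →
        ‖(k : ℝ)⁻¹ • (∑ i ∈ S, X i ω) - μstar‖
          ≤ (1 / 2) * ‖μ - μstar‖ + 2 * σ} with hG
  have hGsub : Gᶜ ⊆ {ω | ¬ (∑ i ∈ T, Z i ω ≤ 2 * (k:ℝ) * σ)} := by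
    intro ω hω
    simp only [Set.mem_compl_iff, hG, Set.mem_setOf_eq] at hω
    intro hcon
    exact hω (hdet ω hcon)
  have hPG : 1 ≤ P G + 5 / (4 * (n : ℝ≥0∞)) := by
    calc (1:ℝ≥0∞) = P Set.univ := (measure_univ (μ := P)).symm
      _ = P (G ∪ Gᶜ) := by rw [Set.union_compl_self]
      _ ≤ P G + P Gᶜ := measure_union_le _ _
      _ ≤ P G + 5 / (4 * (n : ℝ≥0∞)) := by
          exact add_le_add_right (le_trans (measure_mono hGsub) hbad) _
  have hfinal : 1 - 5 / (4 * (n : ℝ≥0∞)) ≤ P G := tsub_le_iff_right.mpr hPG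
  -- identify G with the goal set
  refine le_trans hfinal (le_of_eq ?_)
  congr 1
end

section
/- Let x_1, …, x_n ∈ ℝ^d, let A and B be disjoint subsets of {1,…,n} with |A| = |B|, let φ: A → B be a bijection, and let n_i ∈ {−1, +1} for i ∈ A. Then the largest singular value of the d×d matrix M = Σ_{i∈A} n_i · x_i x_{φ(i)}ᵀ satisfies s_max(M) ≤ ψ⁺(|A|), where ψ⁺(k) := max_{S ⊆ {1,…,n}, |S|=k} λ_max(Σ_{i∈S} x_i x_iᵀ). -/
set_option autoImplicit false

open Finset Matrix

/-- The Gram matrix `∑_{i ∈ S} x_i x_iᵀ` of a subset of the sample points. -/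
noncomputable def gramMatrix {n d : ℕ} (x : Fin n → EuclideanSpace ℝ (Fin d))
    (S : Finset (Fin n)) : Matrix (Fin d) (Fin d) ℝ :=
  ∑ i ∈ S, Matrix.of fun j k => x i j * x i k

/-- `ψ⁺(k)`: the maximum over all size-`k` subsets `S` of the largest eigenvalue
of `∑_{i ∈ S} x_i x_iᵀ`. -/
noncomputable def psiPlus {n d : ℕ} (x : Fin n → EuclideanSpace ℝ (Fin d)) (k : ℕ) : ℝ :=
  sSup {r : ℝ | ∃ S : Finset (Fin n), S.card = k ∧ r = lambdaMax (gramMatrix x S)}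

/-- The largest singular value of a real square matrix. -/
noncomputable def sMax {d : ℕ} (M : Matrix (Fin d) (Fin d) ℝ) : ℝ :=
  Real.sqrt (lambdaMax (Mᵀ * M))

variable {d : ℕ}

lemma eigen_eq_eigenvalue {G : Matrix (Fin d) (Fin d) ℝ} (hG : G.IsHermitian)
    {r : ℝ} (hr : r ∈ {r : ℝ | ∃ v : Fin d → ℝ, v ≠ 0 ∧ G.mulVec v = r • v}) :
    ∃ i, r = hG.eigenvalues i := by
  obtain ⟨v, hv0, hGv⟩ := hr
  set u := hG.eigenvectorBasis
  set vE : EuclideanSpace ℝ (Fin d) := WithLp.toLp 2 v with hvE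
  set c : Fin d → ℝ := fun i => inner ℝ (u i) vE with hc
  have hrepr : ∑ i, c i • u i = vE := by
    simpa [hc] using u.sum_repr' vE
  have hciz : ∃ i, c i ≠ 0 := by
    by_contra h
    push_neg at h
    apply hv0
    have : vE = 0 := by
      rw [← hrepr]; simp [h]
    exact congrArg WithLp.ofLp this
  obtain ⟨i, hci⟩ := hciz
  refine ⟨i, ?_⟩
  have hv' : v = ∑ j, c j • (u j : EuclideanSpace ℝ (Fin d)) := by
    rw [hrepr]
  have hGv2 : G.mulVec v = ∑ j, (c j * hG.eigenvalues j) • (u j : EuclideanSpace ℝ (Fin d)) := by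
    calc G.mulVec v = G.mulVec (∑ j, c j • (u j : EuclideanSpace ℝ (Fin d))) := by rw [hv']; simp only [WithLp.ofLp_sum, WithLp.ofLp_smul]
      _ = ∑ j, (c j * hG.eigenvalues j) • (u j : EuclideanSpace ℝ (Fin d)) := by
          rw [← Matrix.mulVecLin_apply, map_sum, WithLp.ofLp_sum]
          refine Finset.sum_congr rfl fun j _ => ?_
          rw [_root_.map_smul, Matrix.mulVecLin_apply, WithLp.ofLp_smul]
          have hb : G.mulVec (u j : Fin d → ℝ) = hG.eigenvalues j • (u j : Fin d → ℝ) :=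
            hG.mulVec_eigenvectorBasis j
          show c j • (G.mulVec (u j : Fin d → ℝ)) = _
          rw [hb, smul_smul, mul_comm]
  have hrv : (r • v : Fin d → ℝ) = ∑ j, (r * c j) • (u j : EuclideanSpace ℝ (Fin d)) := by
    show WithLp.ofLp (r • vE) = _
    congr 1
    rw [← hrepr, Finset.smul_sum]
    refine Finset.sum_congr rfl fun j _ => ?_
    rw [smul_smul]
  have hsum : ∑ j, (c j * hG.eigenvalues j) • (u j : EuclideanSpace ℝ (Fin d))
      = ∑ j, (r * c j) • (u j : EuclideanSpace ℝ (Fin d)) := by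
    exact WithLp.ofLp_injective 2 (hGv2.symm.trans (hGv.trans hrv))
  have e1 := u.orthonormal.inner_right_fintype (fun j => c j * hG.eigenvalues j) i
  have e2 := u.orthonormal.inner_right_fintype (fun j => r * c j) i
  rw [hsum] at e1
  have : c i * hG.eigenvalues i = r * c i := by rw [← e1, e2]
  have : c i * hG.eigenvalues i = c i * r := by rw [this, mul_comm]
  exact (mul_left_cancel₀ hci this).symm

lemma eigenvalue_mem {G : Matrix (Fin d) (Fin d) ℝ} (hG : G.IsHermitian) (i : Fin d) :
    hG.eigenvalues i ∈ {r : ℝ | ∃ v : Fin d → ℝ, v ≠ 0 ∧ G.mulVec v = r • v} := by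
  refine ⟨hG.eigenvectorBasis i, ?_, hG.mulVec_eigenvectorBasis i⟩
  intro h
  exact hG.eigenvectorBasis.orthonormal.ne_zero i (by ext j; exact congrFun h j)

lemma eigenset_bddAbove {G : Matrix (Fin d) (Fin d) ℝ} (hG : G.IsHermitian) :
    BddAbove {r : ℝ | ∃ v : Fin d → ℝ, v ≠ 0 ∧ G.mulVec v = r • v} := by
  refine (Set.finite_range hG.eigenvalues).bddAbove.mono ?_
  intro r hr
  obtain ⟨i, hi⟩ := eigen_eq_eigenvalue hG hr
  exact ⟨i, hi.symm⟩

lemma eigenvalue_le_lambdaMax {G : Matrix (Fin d) (Fin d) ℝ} (hG : G.IsHermitian) (i : Fin d) :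
    hG.eigenvalues i ≤ lambdaMax G :=
  le_csSup (eigenset_bddAbove hG) (eigenvalue_mem hG i)

lemma quadform_le_lambdaMax {G : Matrix (Fin d) (Fin d) ℝ} (hG : G.IsHermitian)
    (v : Fin d → ℝ) : v ⬝ᵥ G.mulVec v ≤ lambdaMax G * (v ⬝ᵥ v) := by
  set u := hG.eigenvectorBasis
  set vE : EuclideanSpace ℝ (Fin d) := WithLp.toLp 2 v with hvE
  set c : Fin d → ℝ := fun i => inner ℝ (u i) vE with hc
  have hrepr : ∑ i, c i • u i = vE := by
    simpa [hc] using u.sum_repr' vE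
  have hGv2 : G.mulVec v = ∑ j, (c j * hG.eigenvalues j) • (u j : EuclideanSpace ℝ (Fin d)) := by
    calc G.mulVec v = G.mulVec (∑ j, c j • (u j : EuclideanSpace ℝ (Fin d))) := by
          show G *ᵥ WithLp.ofLp vE = _
          rw [← hrepr, WithLp.ofLp_sum]; simp only [WithLp.ofLp_smul]
      _ = ∑ j, (c j * hG.eigenvalues j) • (u j : EuclideanSpace ℝ (Fin d)) := by
          rw [← Matrix.mulVecLin_apply, map_sum, WithLp.ofLp_sum]
          refine Finset.sum_congr rfl fun j _ => ?_
          rw [_root_.map_smul, Matrix.mulVecLin_apply, WithLp.ofLp_smul]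
          have hb : G.mulVec (u j : Fin d → ℝ) = hG.eigenvalues j • (u j : Fin d → ℝ) :=
            hG.mulVec_eigenvectorBasis j
          show c j • (G.mulVec (u j : Fin d → ℝ)) = _
          rw [hb, smul_smul, mul_comm]
  have hinner : ∀ w : EuclideanSpace ℝ (Fin d), (v : Fin d → ℝ) ⬝ᵥ (w : Fin d → ℝ)
      = inner ℝ vE w := by
    intro w
    rw [PiLp.inner_apply]
    simp [dotProduct, RCLike.inner_apply, hvE]
    exact Finset.sum_congr rfl fun _ _ => mul_comm _ _
  have hq : v ⬝ᵥ G.mulVec v = ∑ j, hG.eigenvalues j * (c j)^2 := by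
    rw [hGv2]
    rw [hinner (∑ j, (c j * hG.eigenvalues j) • (u j : EuclideanSpace ℝ (Fin d)))]
    rw [inner_sum]
    refine Finset.sum_congr rfl fun j _ => ?_
    rw [real_inner_smul_right]
    have : inner ℝ vE (u j : EuclideanSpace ℝ (Fin d)) = c j := by
      rw [real_inner_comm]
    rw [this]; ring
  have hn : v ⬝ᵥ v = ∑ j, (c j)^2 := by
    rw [hinner vE]
    nth_rewrite 2 [← hrepr]
    rw [inner_sum]
    refine Finset.sum_congr rfl fun j _ => ?_
    rw [real_inner_smul_right, real_inner_comm]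
    show c j * c j = _
    ring
  rw [hq, hn, Finset.mul_sum]
  refine Finset.sum_le_sum fun j _ => ?_
  exact mul_le_mul_of_nonneg_right (eigenvalue_le_lambdaMax hG j) (sq_nonneg _)

lemma gram_hermitian {n : ℕ} (x : Fin n → EuclideanSpace ℝ (Fin d)) (S : Finset (Fin n)) :
    (gramMatrix x S).IsHermitian := by
  show _ᴴ = _
  ext j k
  simp [gramMatrix, Matrix.conjTranspose_apply, Matrix.sum_apply, mul_comm]

lemma gram_mulVec {n : ℕ} (x : Fin n → EuclideanSpace ℝ (Fin d)) (S : Finset (Fin n))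
    (v : Fin d → ℝ) :
    (gramMatrix x S).mulVec v = fun j => ∑ i ∈ S, ((x i : Fin d → ℝ) ⬝ᵥ v) * x i j := by
  funext j
  simp only [Matrix.mulVec, dotProduct, gramMatrix, Matrix.sum_apply, Matrix.of_apply,
    Finset.sum_mul]
  rw [Finset.sum_comm]
  refine Finset.sum_congr rfl fun i _ => ?_
  refine Finset.sum_congr rfl fun k _ => ?_
  ring

lemma gram_quadform {n : ℕ} (x : Fin n → EuclideanSpace ℝ (Fin d)) (S : Finset (Fin n))
    (v : Fin d → ℝ) :
    v ⬝ᵥ (gramMatrix x S).mulVec v = ∑ i ∈ S, ((x i : Fin d → ℝ) ⬝ᵥ v)^2 := by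
  rw [gram_mulVec]
  simp only [dotProduct, Finset.mul_sum]
  rw [Finset.sum_comm]
  refine Finset.sum_congr rfl fun i _ => ?_
  have h2 : ∑ k, v k * ((∑ l, x i l * v l) * x i k)
      = (∑ l, x i l * v l) * ∑ k, x i k * v k := by
    rw [Finset.mul_sum]
    exact Finset.sum_congr rfl fun k _ => by ring
  rw [h2, sq]

lemma dotProduct_self_pos {v : Fin d → ℝ} (hv : v ≠ 0) : 0 < v ⬝ᵥ v := by
  have h1 : 0 ≤ v ⬝ᵥ v := Finset.sum_nonneg fun i _ => mul_self_nonneg _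
  have h2 : v ⬝ᵥ v ≠ 0 := fun h => hv (dotProduct_self_eq_zero.1 h)
  exact lt_of_le_of_ne h1 (Ne.symm h2)

lemma lambdaMax_gram_nonneg {n : ℕ} (x : Fin n → EuclideanSpace ℝ (Fin d))
    (S : Finset (Fin n)) : 0 ≤ lambdaMax (gramMatrix x S) := by
  by_cases h : {r : ℝ | ∃ v : Fin d → ℝ, v ≠ 0 ∧ (gramMatrix x S).mulVec v = r • v}.Nonempty
  · obtain ⟨r, hr⟩ := h
    have hle := le_csSup (eigenset_bddAbove (gram_hermitian x S)) hr
    obtain ⟨v, hv0, hGv⟩ := hr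
    have hq : r * (v ⬝ᵥ v) = ∑ i ∈ S, ((x i : Fin d → ℝ) ⬝ᵥ v)^2 := by
      rw [← gram_quadform, hGv]
      simp [dotProduct_smul, smul_eq_mul, dotProduct]
      rw [Finset.mul_sum]
      exact Finset.sum_congr rfl fun j _ => by ring
    have hq0 : 0 ≤ r * (v ⬝ᵥ v) := hq ▸ Finset.sum_nonneg fun i _ => sq_nonneg _
    have hvv := dotProduct_self_pos hv0
    have : 0 ≤ r := by nlinarith
    exact this.trans hle
  · rw [Set.not_nonempty_iff_eq_empty] at h
    unfold lambdaMax
    rw [h, Real.sSup_empty]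

theorem stmt10 (n d : ℕ) (x : Fin n → EuclideanSpace ℝ (Fin d))
    (A B : Finset (Fin n)) (hAB : Disjoint A B) (hcard : A.card = B.card)
    (φ : Fin n → Fin n) (hφmem : ∀ i ∈ A, φ i ∈ B) (hφinj : Set.InjOn φ ↑A)
    (sgn : Fin n → ℝ) (hsgn : ∀ i ∈ A, sgn i = 1 ∨ sgn i = -1)
    (M : Matrix (Fin d) (Fin d) ℝ)
    (hM : M = ∑ i ∈ A, sgn i • Matrix.of fun j k => x i j * x (φ i) k) :
    sMax M ≤ psiPlus x A.card := by
  classical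
  set P := psiPlus x A.card with hP
  have hPbdd : BddAbove {r : ℝ | ∃ S : Finset (Fin n), S.card = A.card ∧
      r = lambdaMax (gramMatrix x S)} := by
    have heq : {r : ℝ | ∃ S : Finset (Fin n), S.card = A.card ∧ r = lambdaMax (gramMatrix x S)}
        = (fun S => lambdaMax (gramMatrix x S)) '' {S : Finset (Fin n) | S.card = A.card} := by
      ext r
      constructor
      · rintro ⟨S, h1, h2⟩; exact ⟨S, h1, h2.symm⟩
      · rintro ⟨S, h1, h2⟩; exact ⟨S, h1, h2.symm⟩
    rw [heq]
    exact ((Set.toFinite _).image _).bddAbove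
  have hle : ∀ S : Finset (Fin n), S.card = A.card → lambdaMax (gramMatrix x S) ≤ P :=
    fun S hS => le_csSup hPbdd ⟨S, hS, rfl⟩
  have hP0 : 0 ≤ P := (lambdaMax_gram_nonneg x A).trans (hle A rfl)
  have hquad : ∀ S : Finset (Fin n), S.card = A.card → ∀ v : Fin d → ℝ,
      ∑ i ∈ S, ((x i : Fin d → ℝ) ⬝ᵥ v)^2 ≤ P * (v ⬝ᵥ v) := by
    intro S hS v
    rw [← gram_quadform]
    refine (quadform_le_lambdaMax (gram_hermitian x S) v).trans ?_
    exact mul_le_mul_of_nonneg_right (hle S hS)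
      (Finset.sum_nonneg fun i _ => mul_self_nonneg _)
  have hAφ : (A.image φ).card = A.card := Finset.card_image_of_injOn hφinj
  have hmain : ∀ r ∈ {r : ℝ | ∃ v : Fin d → ℝ, v ≠ 0 ∧ (Mᵀ * M).mulVec v = r • v}, r ≤ P^2 := by
    rintro r ⟨v, hv0, heig⟩
    set w := M.mulVec v with hw
    have hvv := dotProduct_self_pos hv0
    have h1 : v ⬝ᵥ (Mᵀ * M).mulVec v = w ⬝ᵥ w := by
      rw [← Matrix.mulVec_mulVec, Matrix.dotProduct_mulVec, Matrix.vecMul_transpose]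
    have h2 : v ⬝ᵥ (Mᵀ * M).mulVec v = r * (v ⬝ᵥ v) := by
      rw [heig, dotProduct_smul, smul_eq_mul]
    have hrw : r * (v ⬝ᵥ v) = w ⬝ᵥ w := by rw [← h1, ← h2]
    have hww0 : 0 ≤ w ⬝ᵥ w := Finset.sum_nonneg fun i _ => mul_self_nonneg _
    have hwv : w = fun j => ∑ i ∈ A, (sgn i * ((x (φ i) : Fin d → ℝ) ⬝ᵥ v)) * x i j := by
      funext j
      rw [hw, hM]
      simp only [Matrix.mulVec, dotProduct, Matrix.sum_apply, Matrix.smul_apply,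
        Matrix.of_apply, smul_eq_mul, Finset.sum_mul]
      rw [Finset.sum_comm]
      refine Finset.sum_congr rfl fun i _ => ?_
      rw [Finset.mul_sum, Finset.sum_mul]
      refine Finset.sum_congr rfl fun k _ => ?_
      ring
    have hww : w ⬝ᵥ w = ∑ i ∈ A, (sgn i * ((x (φ i) : Fin d → ℝ) ⬝ᵥ v))
        * ((x i : Fin d → ℝ) ⬝ᵥ w) := by
      show ∑ j, w j * w j = _
      nth_rewrite 1 [hwv]
      simp only [Finset.sum_mul]
      rw [Finset.sum_comm]
      refine Finset.sum_congr rfl fun i _ => ?_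
      rw [show (x i : Fin d → ℝ) ⬝ᵥ w = ∑ j, x i j * w j from rfl, Finset.mul_sum]
      refine Finset.sum_congr rfl fun j _ => ?_
      ring
    set a := ∑ i ∈ A, ((x (φ i) : Fin d → ℝ) ⬝ᵥ v)^2 with hadef
    set b := ∑ i ∈ A, ((x i : Fin d → ℝ) ⬝ᵥ w)^2 with hbdef
    have ha0 : 0 ≤ a := Finset.sum_nonneg fun i _ => sq_nonneg _
    have hb0 : 0 ≤ b := Finset.sum_nonneg fun i _ => sq_nonneg _
    have hCS : (w ⬝ᵥ w)^2 ≤ a * b := by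
      rw [hww]
      refine le_trans (Finset.sum_mul_sq_le_sq_mul_sq A _ _) ?_
      have : ∑ i ∈ A, (sgn i * ((x (φ i) : Fin d → ℝ) ⬝ᵥ v))^2 = a := by
        rw [hadef]
        refine Finset.sum_congr rfl fun i hi => ?_
        rcases hsgn i hi with h | h <;> rw [h] <;> ring
      rw [this]
    have ha : a ≤ P * (v ⬝ᵥ v) := by
      have himg : a = ∑ i ∈ A.image φ, ((x i : Fin d → ℝ) ⬝ᵥ v)^2 := by
        rw [hadef, Finset.sum_image (fun i hi j hj h => hφinj hi hj h)]
      rw [himg]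
      exact hquad (A.image φ) hAφ v
    have hb : b ≤ P * (w ⬝ᵥ w) := hquad A rfl w
    have hfin : (w ⬝ᵥ w)^2 ≤ (P * (v ⬝ᵥ v)) * (P * (w ⬝ᵥ w)) :=
      hCS.trans (mul_le_mul ha hb hb0 (mul_nonneg hP0 hvv.le))
    rcases eq_or_lt_of_le hww0 with hz | hpos
    · have : r * (v ⬝ᵥ v) = 0 := by rw [hrw, ← hz]
      have hr0 : r = 0 := by
        rcases mul_eq_zero.1 this with h | h
        · exact h
        · exact absurd h hvv.ne'
      rw [hr0]; exact sq_nonneg P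
    · have h3 : w ⬝ᵥ w ≤ P^2 * (v ⬝ᵥ v) := by nlinarith
      have : r * (v ⬝ᵥ v) ≤ P^2 * (v ⬝ᵥ v) := by rw [hrw]; exact h3
      exact le_of_mul_le_mul_right (by linarith [this]) hvv
  have hlam : lambdaMax (Mᵀ * M) ≤ P^2 := Real.sSup_le hmain (sq_nonneg P)
  calc sMax M = Real.sqrt (lambdaMax (Mᵀ * M)) := rfl
    _ ≤ Real.sqrt (P^2) := Real.sqrt_le_sqrt hlam
    _ = P := by rw [Real.sqrt_sq hP0]
end

section
/- Consider the linear model y_i = x_iᵀβ* + ε_i for i = 1,…,n, where the ε_i are independent with mean 0 and variances σ_i², independent of the x_i, and ‖x_i‖₂ = 1 for all i. Let σ_(k) denote the k-th smallest value among {σ_i}_{i=1}^n and assume σ_(⌈αn⌉) > 0. Define ψ⁻(k) = min_{T: |T|=k} λ_min(Σ_{i∈T} x_i x_iᵀ), suppose there is a constant c₁ > 0 such that ψ⁻(⌈αn⌉) ≥ ⌈αn⌉/c₁, and fix α ≥ 4c₁/(1 + 4c₁). Run the ITSM algorithm: β_0 is the least squares estimator on all n samples, and for each t, S_t is a subset of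 size ⌈αn⌉ minimizing Σ_{i∈S} (y_i − x_iᵀβ_t)² over all subsets of size ⌈αn⌉, and β_{t+1} = (X_{S_t}ᵀ X_{S_t})^{-1} X_{S_t}ᵀ y_{S_t}. If T ≥ log₂(‖β_0 − β*‖₂ / σ_(⌈αn⌉)), then with probability at least 1 − T(1+4c₁)/(4c₁n), ‖β_T − β*‖₂ ≤ (1 + 4c₁)·σ_(⌈αn⌉). -/
set_option autoImplicit false

open MeasureTheory ProbabilityTheory Finset
open scoped ENNReal NNReal

/-- The smallest eigenvalue of a matrix. -/
noncomputable def lambdaMin {d : ℕ} (M : Matrix (Fin d) (Fin d) ℝ) : ℝ :=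
  sInf {r : ℝ | ∃ v : Fin d → ℝ, v ≠ 0 ∧ M.mulVec v = r • v}

/-- `ψ⁻(k)`: the minimum over all size-`k` subsets `T` of the smallest eigenvalue
of `∑_{i ∈ T} x_i x_iᵀ`. -/
noncomputable def psiMinus {n d : ℕ} (x : Fin n → EuclideanSpace ℝ (Fin d)) (k : ℕ) : ℝ :=
  sInf {r : ℝ | ∃ T : Finset (Fin n), T.card = k ∧ r = lambdaMin (gramMatrix x T)}

open scoped RealInnerProductSpace

lemma itsm_gram_quad {n d : ℕ} (x : Fin n → EuclideanSpace ℝ (Fin d)) (S : Finset (Fin n))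
    (u : Fin d → ℝ) :
    ∑ l, (gramMatrix x S).mulVec u l * u l = ∑ i ∈ S, (∑ l, x i l * u l)^2 := by
  have h1 : ∀ l, (gramMatrix x S).mulVec u l * u l
      = ∑ i ∈ S, (x i l * u l) * (∑ j, x i j * u j) := by
    intro l
    simp only [gramMatrix, Matrix.mulVec, dotProduct, Matrix.sum_apply, Matrix.of_apply,
      Finset.sum_mul, Finset.mul_sum]
    rw [Finset.sum_comm]
    exact Finset.sum_congr rfl fun i _ => Finset.sum_congr rfl fun j _ => by ring
  rw [Finset.sum_congr rfl fun l _ => h1 l, Finset.sum_comm]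
  exact Finset.sum_congr rfl fun i _ => by rw [← Finset.sum_mul, sq]

lemma itsm_gram_eig_nonneg {n d : ℕ} (x : Fin n → EuclideanSpace ℝ (Fin d)) (S : Finset (Fin n))
    (r : ℝ) (hr : r ∈ {r : ℝ | ∃ v : Fin d → ℝ, v ≠ 0 ∧ (gramMatrix x S).mulVec v = r • v}) :
    0 ≤ r := by
  obtain ⟨v, hv0, hv⟩ := hr
  have hs : 0 < ∑ l, v l ^ 2 := by
    obtain ⟨j, hj⟩ := Function.ne_iff.mp hv0
    have h2 : 0 < v j ^ 2 := lt_of_le_of_ne (sq_nonneg _) (Ne.symm (pow_ne_zero 2 hj))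
    exact Finset.sum_pos' (fun l _ => sq_nonneg _) ⟨j, Finset.mem_univ j, h2⟩
  have hq : 0 ≤ ∑ l, (gramMatrix x S).mulVec v l * v l := by
    rw [itsm_gram_quad]; exact Finset.sum_nonneg fun i _ => sq_nonneg _
  have heq : ∑ l, (gramMatrix x S).mulVec v l * v l = r * ∑ l, v l ^ 2 := by
    rw [hv]; simp only [Pi.smul_apply, smul_eq_mul, Finset.mul_sum]
    exact Finset.sum_congr rfl fun l _ => by ring
  nlinarith

lemma itsm_lambdaMin_nonneg {n d : ℕ} (x : Fin n → EuclideanSpace ℝ (Fin d))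
    (S : Finset (Fin n)) : 0 ≤ lambdaMin (gramMatrix x S) :=
  Real.sInf_nonneg (itsm_gram_eig_nonneg x S)

lemma itsm_gram_rayleigh {n d : ℕ} (hd : 0 < d) (x : Fin n → EuclideanSpace ℝ (Fin d))
    (S : Finset (Fin n)) (u : Fin d → ℝ) :
    lambdaMin (gramMatrix x S) * (∑ l, u l ^ 2) ≤ ∑ i ∈ S, (∑ l, x i l * u l)^2 := by
  haveI : Nontrivial (EuclideanSpace ℝ (Fin d)) := by
    refine nontrivial_of_ne (EuclideanSpace.single ⟨0, hd⟩ (1:ℝ)) 0 ?_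
    intro h
    have := congrFun (congrArg (fun (z : EuclideanSpace ℝ (Fin d)) => (z : Fin d → ℝ)) h) ⟨0, hd⟩
    simp [EuclideanSpace.single_apply] at this
  set M := gramMatrix x S with hM
  set T := Matrix.toEuclideanLin M with hT
  have hTapp : ∀ (v : EuclideanSpace ℝ (Fin d)) l, (T v) l = M.mulVec (fun j => v j) l :=
    fun v l => rfl
  have hMsymm : ∀ l j, M l j = M j l := by
    intro l j; simp only [hM, gramMatrix, Matrix.sum_apply, Matrix.of_apply]
    exact Finset.sum_congr rfl fun i _ => mul_comm _ _
  have hinner : ∀ v w : EuclideanSpace ℝ (Fin d), ⟪v, w⟫ = ∑ l, v l * w l := by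
    intro v w; simp [PiLp.inner_apply, RCLike.inner_apply, mul_comm]
  have hsym : T.IsSymmetric := by
    intro v w
    rw [hinner, hinner]
    calc ∑ l, (T v) l * w l = ∑ l, ∑ j, M l j * v j * w l := by
          refine Finset.sum_congr rfl fun l _ => ?_
          rw [hTapp]; simp only [Matrix.mulVec, dotProduct, Finset.sum_mul]
      _ = ∑ j, ∑ l, M l j * v j * w l := Finset.sum_comm
      _ = ∑ j, v j * (T w) j := by
          refine Finset.sum_congr rfl fun j _ => ?_
          rw [hTapp]; simp only [Matrix.mulVec, dotProduct, Finset.mul_sum]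
          exact Finset.sum_congr rfl fun l _ => by rw [hMsymm l j]; ring
  have hquad : ∀ v : EuclideanSpace ℝ (Fin d), ⟪T v, v⟫ = ∑ i ∈ S, (∑ l, x i l * v l)^2 := by
    intro v
    rw [hinner, ← itsm_gram_quad x S (fun j => v j)]
    rfl
  have hbdd : BddBelow (Set.range fun v : {v : EuclideanSpace ℝ (Fin d) // v ≠ 0} =>
      RCLike.re (⟪T v, (v : EuclideanSpace ℝ (Fin d))⟫ : ℝ) / ‖(v : EuclideanSpace ℝ (Fin d))‖^2) := by
    refine ⟨0, fun r hr => ?_⟩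
    obtain ⟨v, rfl⟩ := hr
    have h1 : (0:ℝ) ≤ ⟪T v, (v : EuclideanSpace ℝ (Fin d))⟫ := by
      rw [hquad]; exact Finset.sum_nonneg fun i _ => sq_nonneg _
    simpa using div_nonneg h1 (sq_nonneg _)
  have heig := hsym.hasEigenvalue_iInf_of_finiteDimensional
  obtain ⟨v, hv⟩ := heig.exists_hasEigenvector
  have hlmle : lambdaMin M ≤ ⨅ v : {v : EuclideanSpace ℝ (Fin d) // v ≠ 0},
      RCLike.re (⟪T v, (v : EuclideanSpace ℝ (Fin d))⟫ : ℝ) / ‖(v : EuclideanSpace ℝ (Fin d))‖^2 := by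
    refine csInf_le ⟨0, fun r hr => itsm_gram_eig_nonneg x S r hr⟩ ?_
    refine ⟨fun j => v j, ?_, ?_⟩
    · intro h0
      exact hv.2 (by ext l; exact congrFun h0 l)
    · have h3 := hv.apply_eq_smul
      funext l
      exact congrFun (congrArg (fun (z : EuclideanSpace ℝ (Fin d)) => (z : Fin d → ℝ)) h3) l
  rcases eq_or_ne u 0 with hu | hu
  · subst hu
    have : lambdaMin M * (∑ l, (0:Fin d → ℝ) l ^ 2) = 0 := by simp
    rw [this]
    exact Finset.sum_nonneg fun i _ => sq_nonneg ((∑ l, x i l * (0:Fin d → ℝ) l))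
  · set uE : EuclideanSpace ℝ (Fin d) := (WithLp.equiv 2 (Fin d → ℝ)).symm u with huE
    have huE0 : uE ≠ 0 := by
      intro h0
      apply hu
      funext l
      exact congrFun (congrArg (fun (z : EuclideanSpace ℝ (Fin d)) => (z : Fin d → ℝ)) h0) l
    have hinf_le : (⨅ v : {v : EuclideanSpace ℝ (Fin d) // v ≠ 0},
        RCLike.re (⟪T v, (v : EuclideanSpace ℝ (Fin d))⟫ : ℝ) / ‖(v : EuclideanSpace ℝ (Fin d))‖^2)
        ≤ RCLike.re (⟪T uE, uE⟫ : ℝ) / ‖uE‖^2 := ciInf_le hbdd ⟨uE, huE0⟩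
    have hnorm : ‖uE‖^2 = ∑ l, u l ^ 2 := by
      rw [EuclideanSpace.norm_eq]
      rw [Real.sq_sqrt (Finset.sum_nonneg fun l _ => sq_nonneg _)]
      exact Finset.sum_congr rfl fun l _ => by rw [Real.norm_eq_abs, sq_abs]; rfl
    have hq2 : RCLike.re (⟪T uE, uE⟫ : ℝ) = ∑ i ∈ S, (∑ l, x i l * u l)^2 := by
      have hre : RCLike.re (⟪T uE, uE⟫ : ℝ) = ⟪T uE, uE⟫ := rfl
      rw [hre]
      exact (hquad uE).trans rfl
    have hpos : 0 < ∑ l, u l ^ 2 := by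
      obtain ⟨j, hj⟩ := Function.ne_iff.mp hu
      exact Finset.sum_pos' (fun l _ => sq_nonneg _)
        ⟨j, Finset.mem_univ j, lt_of_le_of_ne (sq_nonneg _) (Ne.symm (pow_ne_zero 2 hj))⟩
    have hfinal := le_trans hlmle hinf_le
    rw [hq2, hnorm] at hfinal
    calc lambdaMin M * (∑ l, u l ^ 2)
        ≤ ((∑ i ∈ S, (∑ l, x i l * u l)^2) / (∑ l, u l ^ 2)) * (∑ l, u l ^ 2) := by
          exact mul_le_mul_of_nonneg_right hfinal (le_of_lt hpos)
      _ = ∑ i ∈ S, (∑ l, x i l * u l)^2 := div_mul_cancel₀ _ (ne_of_gt hpos)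

lemma itsm_gram_inv_bound {n d : ℕ} (hd : 0 < d) (x : Fin n → EuclideanSpace ℝ (Fin d))
    (S : Finset (Fin n)) (a : ℝ) (ha : 0 < a) (hray : a ≤ lambdaMin (gramMatrix x S)) :
    IsUnit (gramMatrix x S).det ∧
    ∀ w : Fin d → ℝ, Real.sqrt (∑ l, ((gramMatrix x S)⁻¹.mulVec w l)^2)
      ≤ (1/a) * Real.sqrt (∑ l, (w l)^2) := by
  set M := gramMatrix x S with hM
  have key : ∀ u : Fin d → ℝ, a * (∑ l, u l ^ 2) ≤ ∑ l, M.mulVec u l * u l := by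
    intro u
    rw [itsm_gram_quad]
    refine le_trans ?_ (itsm_gram_rayleigh hd x S u)
    exact mul_le_mul_of_nonneg_right hray (Finset.sum_nonneg fun l _ => sq_nonneg _)
  have sumpos : ∀ u : Fin d → ℝ, u ≠ 0 → 0 < ∑ l, u l ^ 2 := by
    intro u hu
    obtain ⟨j, hj⟩ := Function.ne_iff.mp hu
    exact Finset.sum_pos' (fun l _ => sq_nonneg _)
      ⟨j, Finset.mem_univ j, lt_of_le_of_ne (sq_nonneg _) (Ne.symm (pow_ne_zero 2 hj))⟩
  have hPD : M.PosDef := by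
    rw [Matrix.posDef_iff_dotProduct_mulVec]
    constructor
    · unfold Matrix.IsHermitian
      ext l j
      simp only [hM, gramMatrix, Matrix.conjTranspose_apply, Matrix.sum_apply, Matrix.of_apply,
        star_trivial]
      exact Finset.sum_congr rfl fun i _ => mul_comm _ _
    · intro u hu
      have h1 : 0 < a * ∑ l, u l ^ 2 := mul_pos ha (sumpos u hu)
      have h2 := key u
      have : dotProduct (star u) (M.mulVec u) = ∑ l, M.mulVec u l * u l := by
        simp only [dotProduct, star_trivial, Pi.star_apply]
        exact Finset.sum_congr rfl fun l _ => mul_comm _ _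
      rw [this]
      linarith
  have hdet : IsUnit M.det := (ne_of_gt hPD.det_pos).isUnit
  refine ⟨hdet, fun w => ?_⟩
  set u := M⁻¹.mulVec w with hu
  have hMu : M.mulVec u = w := by
    rw [hu, Matrix.mulVec_mulVec, Matrix.mul_nonsing_inv M hdet, Matrix.one_mulVec]
  have h3 : a * (∑ l, u l ^ 2) ≤ ∑ l, w l * u l := by
    have := key u; rw [hMu] at this; exact this
  have hcs : (∑ l, w l * u l) ≤ Real.sqrt (∑ l, (w l)^2) * Real.sqrt (∑ l, (u l)^2) := by
    have h4 := Finset.sum_mul_sq_le_sq_mul_sq Finset.univ w u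
    have h5 : ∑ l, w l * u l ≤ |∑ l, w l * u l| := le_abs_self _
    refine h5.trans ?_
    rw [← Real.sqrt_sq_eq_abs, ← Real.sqrt_mul (Finset.sum_nonneg fun l _ => sq_nonneg _)]
    exact Real.sqrt_le_sqrt h4
  rcases eq_or_lt_of_le (Finset.sum_nonneg (fun l (_ : l ∈ Finset.univ) => sq_nonneg (u l))) with hz | hz
  · rw [← hz, Real.sqrt_zero]
    positivity
  · have hsq : Real.sqrt (∑ l, u l ^2) ^ 2 = ∑ l, u l ^2 :=
      Real.sq_sqrt (le_of_lt hz)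
    have hsqpos : 0 < Real.sqrt (∑ l, u l ^2) := Real.sqrt_pos.mpr hz
    have : a * (Real.sqrt (∑ l, u l^2) * Real.sqrt (∑ l, u l^2)) ≤ Real.sqrt (∑ l, (w l)^2) * Real.sqrt (∑ l, u l^2) := by
      calc a * (Real.sqrt (∑ l, u l^2) * Real.sqrt (∑ l, u l^2)) = a * (∑ l, u l^2) := by
            rw [← sq, hsq]
        _ ≤ ∑ l, w l * u l := h3
        _ ≤ _ := hcs
    have h6 := le_of_mul_le_mul_right (by linarith [this] : a * Real.sqrt (∑ l, u l^2) * Real.sqrt (∑ l, u l^2) ≤ Real.sqrt (∑ l, (w l)^2) * Real.sqrt (∑ l, u l^2)) hsqpos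
    rw [one_div_mul_eq_div, le_div_iff₀ ha, mul_comm]
    exact h6

lemma itsm_sdiff_abs_sum_le {n : ℕ} (f : Fin n → ℝ) (S Sstar : Finset (Fin n))
    (hcard : S.card = Sstar.card) (hpt : ∀ i ∈ S, ∀ j ∉ S, |f i| ≤ |f j|) :
    ∑ i ∈ S \ Sstar, |f i| ≤ ∑ j ∈ Sstar \ S, |f j| := by
  have hc2 : (S \ Sstar).card = (Sstar \ S).card := Finset.card_sdiff_comm hcard
  rcases Finset.eq_empty_or_nonempty (S \ Sstar) with he | hne
  · rw [he]; simp
    exact Finset.sum_nonneg fun j _ => abs_nonneg _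
  · have hne2 : (Sstar \ S).Nonempty := by
      rw [← Finset.card_pos, ← hc2, Finset.card_pos]; exact hne
    obtain ⟨j0, hj0, hj0min⟩ := Finset.exists_min_image (Sstar \ S) (fun j => |f j|) hne2
    have hj0S : j0 ∉ S := (Finset.mem_sdiff.mp hj0).2
    calc ∑ i ∈ S \ Sstar, |f i| ≤ (S \ Sstar).card • |f j0| := by
          refine Finset.sum_le_card_nsmul _ _ _ fun i hi => ?_
          exact hpt i (Finset.mem_sdiff.mp hi).1 j0 hj0S
      _ = (Sstar \ S).card • |f j0| := by rw [hc2]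
      _ ≤ ∑ j ∈ Sstar \ S, |f j| := Finset.card_nsmul_le_sum _ _ _ fun j hj => hj0min j hj

lemma itsm_sstar_exists {n : ℕ} (σ : Fin n → ℝ) (k : ℕ) (hk : k ≤ n) (hk0 : 0 < k) :
    ∃ Sstar : Finset (Fin n), Sstar.card = k ∧
      ∀ i ∈ Sstar, σ i ≤ σ (Tuple.sort σ ⟨k - 1, by omega⟩) := by
  refine ⟨(Finset.univ.filter (fun j : Fin n => (j : ℕ) < k)).image (Tuple.sort σ), ?_, ?_⟩
  · rw [Finset.card_image_of_injective _ (Equiv.injective _)]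
    have hmap : Finset.map (Fin.castLEEmb hk) Finset.univ
        = Finset.univ.filter (fun j : Fin n => (j : ℕ) < k) := by
      ext i
      simp only [Finset.mem_map, Finset.mem_univ, true_and, Finset.mem_filter,
        Fin.castLEEmb_apply]
      constructor
      · rintro ⟨a, rfl⟩; simpa using a.isLt
      · intro hi; exact ⟨⟨(i:ℕ), hi⟩, by ext; simp⟩
    rw [← hmap, Finset.card_map, Finset.card_univ, Fintype.card_fin]
  · intro i hi
    obtain ⟨j, hj, rfl⟩ := Finset.mem_image.mp hi
    have hjk : (j:ℕ) < k := (Finset.mem_filter.mp hj).2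
    have : j ≤ (⟨k-1, by omega⟩ : Fin n) := by
      rw [Fin.le_def]; simp; omega
    exact Tuple.monotone_sort σ this

lemma itsm_cheb {Ω : Type*} [MeasurableSpace Ω] (P : Measure Ω) [IsProbabilityMeasure P]
    (n : ℕ) (ε : Fin n → Ω → ℝ) (σ : Fin n → ℝ) (hσ : ∀ i, 0 ≤ σ i)
    (hindep : iIndepFun ε P)
    (hL2 : ∀ i, MemLp (ε i) 2 P)
    (hvar : ∀ i, ∫ ω, (ε i ω) ^ 2 ∂P = σ i ^ 2)
    (Sstar : Finset (Fin n)) (hk : 0 < Sstar.card) (sig : ℝ) (hsigpos : 0 < sig)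
    (hsb : ∀ i ∈ Sstar, σ i ≤ sig) :
    P {ω | 2 * (Sstar.card : ℝ) * sig < ∑ i ∈ Sstar, |ε i ω|}
      ≤ ENNReal.ofReal (1 / (Sstar.card : ℝ)) := by
  set k : ℝ := (Sstar.card : ℝ) with hkdef
  have hkpos : (0:ℝ) < k := by rw [hkdef]; exact_mod_cast hk
  set Z : Ω → ℝ := fun ω => ∑ i ∈ Sstar, |ε i ω| with hZ
  have habsL2 : ∀ i, MemLp (fun ω => |ε i ω|) 2 P := fun i => (hL2 i).abs
  have hZL2 : MemLp Z 2 P := by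
    have h := memLp_finset_sum' (μ := P) Sstar (f := fun i ω => |ε i ω|) (p := 2)
      (fun i _ => habsL2 i)
    have he : (∑ i ∈ Sstar, fun ω => |ε i ω|) = Z := by
      funext ω; rw [hZ]; simp [Finset.sum_apply]
    rwa [he] at h
  have hsqeq : ∀ i, (∫ ω, |ε i ω| ^ 2 ∂P) = σ i ^ 2 := by
    intro i
    rw [← hvar i]
    exact integral_congr_ae (Filter.Eventually.of_forall fun ω => sq_abs _)
  have hmeanabs : ∀ i ∈ Sstar, ∫ ω, |ε i ω| ∂P ≤ σ i := by
    intro i _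
    have hV := variance_nonneg (fun ω => |ε i ω|) P
    have hVd : variance (fun ω => |ε i ω|) P
        = (∫ ω, |ε i ω| ^ 2 ∂P) - (∫ ω, |ε i ω| ∂P) ^ 2 := by
      have := variance_eq_sub (habsL2 i)
      simpa [Pi.pow_apply] using this
    have h1 : (∫ ω, |ε i ω| ∂P) ^ 2 ≤ σ i ^ 2 := by
      rw [hVd, hsqeq i] at hV; linarith
    have h2 : 0 ≤ ∫ ω, |ε i ω| ∂P :=
      integral_nonneg fun ω => abs_nonneg _
    nlinarith [hσ i]
  have hint : ∀ i ∈ Sstar, Integrable (fun ω => |ε i ω|) P :=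
    fun i _ => (habsL2 i).integrable one_le_two
  have hmeanZ : ∫ ω, Z ω ∂P ≤ k * sig := by
    rw [hZ]
    rw [integral_finset_sum Sstar hint]
    calc ∑ i ∈ Sstar, ∫ ω, |ε i ω| ∂P ≤ ∑ i ∈ Sstar, sig := by
          exact Finset.sum_le_sum fun i hi => le_trans (hmeanabs i hi) (hsb i hi)
      _ = k * sig := by rw [Finset.sum_const, nsmul_eq_mul]
  have hVarZ : variance Z P ≤ k * sig ^ 2 := by
    have hvs : variance Z P = ∑ i ∈ Sstar, variance (fun ω => |ε i ω|) P := by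
      rw [hZ]
      have h := IndepFun.variance_sum (μ := P) (X := fun i ω => |ε i ω|) (s := Sstar)
        (fun i _ => habsL2 i)
        (fun i _ j _ hij => (hindep.comp (fun _ => (|·|)) (fun _ => measurable_abs)).indepFun hij)
      have he : (∑ i ∈ Sstar, fun ω => |ε i ω|) = fun ω => ∑ i ∈ Sstar, |ε i ω| := by
        funext ω; simp [Finset.sum_apply]
      rwa [he] at h
    rw [hvs]
    calc ∑ i ∈ Sstar, variance (fun ω => |ε i ω|) P ≤ ∑ i ∈ Sstar, σ i ^2 := by
          refine Finset.sum_le_sum fun i hi => ?_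
          refine le_trans (variance_le_expectation_sq (habsL2 i).aestronglyMeasurable) ?_
          rw [show ((fun ω => |ε i ω|) ^ 2) = fun ω => |ε i ω| ^2 from rfl]
          rw [hsqeq i]
      _ ≤ ∑ i ∈ Sstar, sig ^2 := Finset.sum_le_sum fun i hi =>
            by nlinarith [hσ i, hsb i hi, hsigpos]
      _ = k * sig ^2 := by rw [Finset.sum_const, nsmul_eq_mul]
  have hcheb := meas_ge_le_variance_div_sq (μ := P) hZL2 (c := k * sig)
    (by positivity)
  have hsub : {ω | 2 * k * sig < Z ω} ⊆ {ω | k * sig ≤ |Z ω - ∫ ω, Z ω ∂P|} := by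
    intro ω hω
    simp only [Set.mem_setOf_eq] at hω ⊢
    have : Z ω - ∫ ω, Z ω ∂P ≥ k * sig := by nlinarith [hmeanZ]
    exact le_trans this (le_abs_self _)
  refine le_trans (measure_mono hsub) (le_trans hcheb ?_)
  refine ENNReal.ofReal_le_ofReal ?_
  rw [div_le_div_iff₀ (by positivity) (by positivity)]
  calc variance Z P * k ≤ (k * sig ^2) * k := by nlinarith [variance_nonneg Z P]
    _ ≤ 1 * (k * sig) ^2 := by ring_nf; nlinarith [hsigpos, hkpos]

lemma itsm_sum_smul_apply {n d : ℕ} (S : Finset (Fin n)) (e : Fin n → ℝ)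
    (x : Fin n → EuclideanSpace ℝ (Fin d)) (l : Fin d) :
    (∑ i ∈ S, e i • x i) l = ∑ i ∈ S, e i * x i l := by
  induction S using Finset.induction_on with
  | empty => simp
  | insert a s h ih => rw [Finset.sum_insert h, Finset.sum_insert h, ← ih]; simp

lemma itsm_sum_split {n : ℕ} (S T : Finset (Fin n)) (f : Fin n → ℝ) :
    ∑ i ∈ S, f i = ∑ i ∈ S ∩ T, f i + ∑ i ∈ S \ T, f i := by
  rw [← Finset.sum_sdiff (Finset.inter_subset_left (s₁ := S) (s₂ := T)),
    Finset.sdiff_inter_self_left]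
  ring

lemma itsm_card_sdiff_le {n : ℕ} (Sstar S : Finset (Fin n)) :
    (S \ Sstar).card ≤ n - Sstar.card := by
  have h1 : S \ Sstar ⊆ Finset.univ \ Sstar := fun i hi =>
    Finset.mem_sdiff.mpr ⟨Finset.mem_univ i, (Finset.mem_sdiff.mp hi).2⟩
  have := Finset.card_le_card h1
  rwa [Finset.card_sdiff_of_subset (Finset.subset_univ _), Finset.card_univ, Fintype.card_fin] at this


set_option maxHeartbeats 1000000 in
theorem stmt16 {Ω : Type*} [MeasurableSpace Ω] (P : Measure Ω) [IsProbabilityMeasure P]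
    (n d : ℕ) (hn : 0 < n)
    (x : Fin n → EuclideanSpace ℝ (Fin d)) (hx : ∀ i, ‖x i‖ = 1)
    (βstar : EuclideanSpace ℝ (Fin d))
    (ε : Fin n → Ω → ℝ) (σ : Fin n → ℝ) (hσ : ∀ i, 0 ≤ σ i)
    (hindep : iIndepFun ε P)
    (hL2 : ∀ i, MemLp (ε i) 2 P)
    (hmean : ∀ i, ∫ ω, ε i ω ∂P = 0)
    (hvar : ∀ i, ∫ ω, (ε i ω) ^ 2 ∂P = σ i ^ 2)
    (y : Fin n → Ω → ℝ)
    (hy : ∀ i ω, y i ω = (∑ j, x i j * βstar j) + ε i ω)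
    (α : ℝ) (hα1 : α ≤ 1) (c₁ : ℝ) (hc₁ : 0 < c₁)
    (hα : 4 * c₁ / (1 + 4 * c₁) ≤ α)
    (hψ : psiMinus x ⌈α * (n : ℝ)⌉₊ ≥ (⌈α * (n : ℝ)⌉₊ : ℝ) / c₁)
    -- σ_(⌈αn⌉), the ⌈αn⌉-th smallest standard deviation
    (sig : ℝ)
    (hsig : sig = orderStat σ ⟨⌈α * (n : ℝ)⌉₊ - 1, ceil_pred_lt α n hn hα1⟩)
    (hsigpos : 0 < sig)
    -- the ITSM iterates
    (βseq : ℕ → Ω → EuclideanSpace ℝ (Fin d)) (Sseq : ℕ → Ω → Finset (Fin n))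
    (hβ0 : ∀ ω, ∀ j, βseq 0 ω j
      = (gramMatrix x Finset.univ)⁻¹.mulVec (fun l => ∑ i, y i ω * x i l) j)
    (hScard : ∀ t ω, (Sseq t ω).card = ⌈α * (n : ℝ)⌉₊)
    (hSmin : ∀ t ω, ∀ S' : Finset (Fin n), S'.card = ⌈α * (n : ℝ)⌉₊ →
      ∑ i ∈ Sseq t ω, (y i ω - ∑ l, x i l * βseq t ω l) ^ 2
        ≤ ∑ i ∈ S', (y i ω - ∑ l, x i l * βseq t ω l) ^ 2)
    (hβsucc : ∀ t ω, ∀ j, βseq (t + 1) ω j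
      = (gramMatrix x (Sseq t ω))⁻¹.mulVec (fun l => ∑ i ∈ Sseq t ω, y i ω * x i l) j)
    (T : ℕ) :
    P {ω | Real.logb 2 (‖βseq 0 ω - βstar‖ / sig) ≤ T →
        ‖βseq T ω - βstar‖ ≤ (1 + 4 * c₁) * sig}
      ≥ 1 - ENNReal.ofReal (T * (1 + 4 * c₁) / (4 * c₁ * n)) := by
  classical
  set K := ⌈α * (n : ℝ)⌉₊ with hKdef
  have h4c : (0:ℝ) < 1 + 4 * c₁ := by linarith
  have hnpos : (0:ℝ) < n := by exact_mod_cast hn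
  have hαpos : 0 < α := lt_of_lt_of_le (by positivity) hα
  have hk0 : 0 < K := Nat.ceil_pos.mpr (by positivity)
  have hkn : K ≤ n := by rw [hKdef, Nat.ceil_le]; nlinarith
  have hKge : α * n ≤ (K:ℝ) := Nat.le_ceil _
  have hKpos : (0:ℝ) < K := by exact_mod_cast hk0
  have hkey : 4 * c₁ * ((n:ℝ) - K) ≤ K := by
    have ha1 : 4*c₁ ≤ (1+4*c₁)*α := by
      rw [div_le_iff₀ h4c] at hα; linarith
    have ha2 : 4*c₁*(n:ℝ) ≤ (1+4*c₁)*(α*(n:ℝ)) := by nlinarith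
    have ha3 : (1+4*c₁)*(α*(n:ℝ)) ≤ (1+4*c₁)*(K:ℝ) := by nlinarith [hKge]
    linarith
  have hd : 0 < d := by
    rcases Nat.eq_zero_or_pos d with h0 | h; swap
    · exact h
    · exfalso
      have h1 := hx ⟨0, hn⟩
      rw [EuclideanSpace.norm_eq] at h1
      subst h0
      simp at h1
  -- the set of indices with the K smallest σ's
  obtain ⟨Sstar, hSstarcard, hsb'⟩ := itsm_sstar_exists σ K hkn hk0
  have hsb : ∀ i ∈ Sstar, σ i ≤ sig := by
    intro i hi; rw [hsig]; exact hsb' i hi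
  -- lower bound on the smallest eigenvalue of any size-K Gram matrix
  have hlam : ∀ S : Finset (Fin n), S.card = K → ((K:ℝ)/c₁) ≤ lambdaMin (gramMatrix x S) := by
    intro S hcard
    refine le_trans hψ (csInf_le ⟨0, ?_⟩ ⟨S, hcard, rfl⟩)
    rintro r ⟨Tt, hTt, rfl⟩; exact itsm_lambdaMin_nonneg x Tt
  have hapos : (0:ℝ) < (K:ℝ)/c₁ := by positivity
  -- deterministic one-step contraction for good ω
  have hstep : ∀ ω, (∑ i ∈ Sstar, |ε i ω|) ≤ 2 * (K:ℝ) * sig → ∀ t,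
      ‖βseq (t+1) ω - βstar‖ ≤ (1/2) * ‖βseq t ω - βstar‖ + 2*c₁*sig := by
    intro ω hgood t
    set S := Sseq t ω with hSdef
    have hcard : S.card = K := hScard t ω
    set M := gramMatrix x S with hMdef
    obtain ⟨hdetM, hinvbd⟩ := itsm_gram_inv_bound hd x S ((K:ℝ)/c₁) hapos (hlam S hcard)
    set e : Fin n → ℝ := fun i => ε i ω with hedef
    set Δ : EuclideanSpace ℝ (Fin d) := βseq t ω - βstar with hΔdef
    set δ := ‖Δ‖ with hδdef
    have hδ0 : 0 ≤ δ := norm_nonneg _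
    set r : Fin n → ℝ := fun i => e i - ∑ l, x i l * Δ l with hrdef
    have hΔl : ∀ l, Δ l = βseq t ω l - βstar l := by
      intro l; rw [hΔdef]; simp
    have hres : ∀ i, y i ω - ∑ l, x i l * βseq t ω l = r i := by
      intro i
      rw [hy i ω, hrdef]
      have hsplit : ∑ l, x i l * βseq t ω l = (∑ l, x i l * βstar l) + ∑ l, x i l * Δ l := by
        rw [← Finset.sum_add_distrib]
        refine Finset.sum_congr rfl fun l _ => ?_
        rw [hΔl l]; ring
      rw [hsplit]; ring
    have hδ2 : ∑ l, (Δ l)^2 = δ^2 := by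
      rw [hδdef, EuclideanSpace.norm_eq,
        Real.sq_sqrt (Finset.sum_nonneg fun l _ => sq_nonneg _)]
      exact Finset.sum_congr rfl fun l _ => by rw [Real.norm_eq_abs, sq_abs]
    have hx2 : ∀ i, ∑ l, (x i l)^2 = 1 := by
      intro i
      have h1 := hx i
      rw [EuclideanSpace.norm_eq] at h1
      have h2 : (∑ l, ‖x i l‖^2) = 1 := by
        rw [← Real.sq_sqrt (Finset.sum_nonneg fun l (_ : l ∈ Finset.univ) => sq_nonneg (‖x i l‖)), h1]
        norm_num
      rw [← h2]
      exact Finset.sum_congr rfl fun l _ => by rw [Real.norm_eq_abs, sq_abs]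
    have hxdot : ∀ i, |∑ l, x i l * Δ l| ≤ δ := by
      intro i
      have hcs := Finset.sum_mul_sq_le_sq_mul_sq Finset.univ (fun l => x i l) (fun l => Δ l)
      calc |∑ l, x i l * Δ l| = Real.sqrt ((∑ l, x i l * Δ l)^2) := (Real.sqrt_sq_eq_abs _).symm
        _ ≤ Real.sqrt (1 * δ^2) := Real.sqrt_le_sqrt (by rw [← hx2 i, ← hδ2]; exact hcs)
        _ = δ := by rw [one_mul, Real.sqrt_sq hδ0]
    have habs_e : ∀ i, |e i| ≤ |r i| + δ := by
      intro i
      have h1 : e i = r i + ∑ l, x i l * Δ l := by rw [hrdef]; ring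
      rw [h1]
      exact (abs_add_le _ _).trans (by linarith [hxdot i])
    have habs_r : ∀ i, |r i| ≤ |e i| + δ := by
      intro i
      rw [hrdef]
      exact (abs_sub _ _).trans (by linarith [hxdot i])
    have hswap : ∀ i ∈ S, ∀ j ∉ S, |r i| ≤ |r j| := by
      intro i hi j hj
      have hins : j ∉ S.erase i := fun h => hj (Finset.mem_of_mem_erase h)
      have hS'card : (insert j (S.erase i)).card = K := by
        rw [Finset.card_insert_of_notMem hins, Finset.card_erase_of_mem hi, hcard]
        omega
      have hmin' : ∑ i' ∈ S, r i' ^2 ≤ ∑ i' ∈ insert j (S.erase i), r i' ^2 := by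
        have h := hSmin t ω _ hS'card
        simpa only [hres] using h
      rw [← Finset.add_sum_erase S _ hi, Finset.sum_insert hins] at hmin'
      have hsq : r i ^2 ≤ r j ^2 := by linarith
      calc |r i| = Real.sqrt (r i^2) := (Real.sqrt_sq_eq_abs _).symm
        _ ≤ Real.sqrt (r j ^2) := Real.sqrt_le_sqrt hsq
        _ = |r j| := Real.sqrt_sq_eq_abs _
    have hpair : ∑ i ∈ S \ Sstar, |r i| ≤ ∑ j ∈ Sstar \ S, |r j| :=
      itsm_sdiff_abs_sum_le r S Sstar (by rw [hcard, hSstarcard]) hswap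
    set m := (S \ Sstar).card with hmdef
    have hmeq : (Sstar \ S).card = m := (Finset.card_sdiff_comm (by rw [hcard, hSstarcard])).symm
    have hmle : (m:ℝ) ≤ (n:ℝ) - K := by
      have h1 : m ≤ n - K := by
        have := itsm_card_sdiff_le Sstar S
        rwa [hSstarcard] at this
      have h2 : (m:ℝ) ≤ ((n - K : ℕ) : ℝ) := by exact_mod_cast h1
      rwa [Nat.cast_sub hkn] at h2
    have hsum_e : ∑ i ∈ S, |e i| ≤ 2*(K:ℝ)*sig + 2*(m:ℝ)*δ := by
      have hpart : ∑ i ∈ S, |e i| = ∑ i ∈ S ∩ Sstar, |e i| + ∑ i ∈ S \ Sstar, |e i| :=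
        itsm_sum_split S Sstar _
      have h1 : ∑ i ∈ S \ Sstar, |e i| ≤ (∑ i ∈ S \ Sstar, |r i|) + m*δ := by
        calc ∑ i ∈ S \ Sstar, |e i| ≤ ∑ i ∈ S \ Sstar, (|r i| + δ) :=
              Finset.sum_le_sum fun i _ => habs_e i
          _ = (∑ i ∈ S \ Sstar, |r i|) + m*δ := by
              rw [Finset.sum_add_distrib, Finset.sum_const, nsmul_eq_mul]
      have h2 : ∑ j ∈ Sstar \ S, |r j| ≤ (∑ j ∈ Sstar \ S, |e j|) + m*δ := by
        calc ∑ j ∈ Sstar \ S, |r j| ≤ ∑ j ∈ Sstar \ S, (|e j| + δ) :=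
              Finset.sum_le_sum fun j _ => habs_r j
          _ = (∑ j ∈ Sstar \ S, |e j|) + m*δ := by
              rw [Finset.sum_add_distrib, Finset.sum_const, hmeq, nsmul_eq_mul]
      have h3 : ∑ i ∈ S ∩ Sstar, |e i| + ∑ j ∈ Sstar \ S, |e j| = ∑ i ∈ Sstar, |e i| := by
        rw [Finset.inter_comm]
        exact (itsm_sum_split Sstar S _).symm
      have h4 : ∑ i ∈ Sstar, |e i| ≤ 2*(K:ℝ)*sig := hgood
      linarith [hpart, h1, hpair, h2, h3, h4]
    set v : Fin d → ℝ := fun l => ∑ i ∈ S, e i * x i l with hvdef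
    have hvnorm : Real.sqrt (∑ l, (v l)^2) ≤ ∑ i ∈ S, |e i| := by
      have hcoords : ∀ l, (∑ i ∈ S, e i • x i) l = v l := fun l => itsm_sum_smul_apply S e x l
      have h2 : ‖∑ i ∈ S, e i • x i‖ = Real.sqrt (∑ l, (v l)^2) := by
        rw [EuclideanSpace.norm_eq]
        congr 1
        exact Finset.sum_congr rfl fun l _ => by rw [hcoords l, Real.norm_eq_abs, sq_abs]
      rw [← h2]
      refine (norm_sum_le _ _).trans (le_of_eq ?_)
      refine Finset.sum_congr rfl fun i _ => ?_
      rw [norm_smul, hx i, Real.norm_eq_abs, mul_one]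
    have hrepr : ∀ j, βseq (t+1) ω j - βstar j = M⁻¹.mulVec v j := by
      intro j
      rw [hβsucc t ω j]
      have hu : (fun l => ∑ i ∈ S, y i ω * x i l)
          = M.mulVec (fun j' => βstar j') + v := by
        funext l
        have hyy : ∀ i, y i ω = (∑ j', x i j' * βstar j') + e i := fun i => hy i ω
        have hMl : M.mulVec (fun j' => βstar j') l
            = ∑ i ∈ S, (∑ j', x i j' * βstar j') * x i l := by
          simp only [hMdef, gramMatrix, Matrix.mulVec, dotProduct, Matrix.sum_apply,
            Matrix.of_apply, Finset.sum_mul, Finset.mul_sum]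
          rw [Finset.sum_comm]
          exact Finset.sum_congr rfl fun i _ => Finset.sum_congr rfl fun j' _ => by ring
        show ∑ i ∈ S, y i ω * x i l = M.mulVec (fun j' => βstar j') l + v l
        rw [hMl, hvdef]
        rw [← Finset.sum_add_distrib]
        exact Finset.sum_congr rfl fun i _ => by rw [hyy i]; ring
      rw [hu, Matrix.mulVec_add, Matrix.mulVec_mulVec, Matrix.nonsing_inv_mul M hdetM,
        Matrix.one_mulVec]
      show (fun j' => βstar j') j + M⁻¹.mulVec v j - βstar j = M⁻¹.mulVec v j
      ring
    have hnormrepr : ‖βseq (t+1) ω - βstar‖ = Real.sqrt (∑ j, (M⁻¹.mulVec v j)^2) := by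
      rw [EuclideanSpace.norm_eq]
      congr 1
      refine Finset.sum_congr rfl fun j _ => ?_
      rw [Real.norm_eq_abs, sq_abs]
      have : (βseq (t+1) ω - βstar) j = βseq (t+1) ω j - βstar j := by simp
      rw [this, hrepr j]
    have e1 : (1/((K:ℝ)/c₁)) = c₁/(K:ℝ) := one_div_div _ _
    have hc4 : 4*c₁*(m:ℝ) ≤ (K:ℝ) := by nlinarith
    calc ‖βseq (t+1) ω - βstar‖ = Real.sqrt (∑ j, (M⁻¹.mulVec v j)^2) := hnormrepr
      _ ≤ (1/((K:ℝ)/c₁)) * Real.sqrt (∑ l, (v l)^2) := hinvbd v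
      _ = (c₁/(K:ℝ)) * Real.sqrt (∑ l, (v l)^2) := by rw [e1]
      _ ≤ (c₁/(K:ℝ)) * (2*(K:ℝ)*sig + 2*(m:ℝ)*δ) := by
          refine mul_le_mul_of_nonneg_left ?_ (by positivity)
          exact hvnorm.trans hsum_e
      _ = 2*c₁*sig + (c₁*(2*(m:ℝ)*δ))/(K:ℝ) := by field_simp
      _ ≤ 2*c₁*sig + (1/2)*δ := by
          have : (c₁*(2*(m:ℝ)*δ))/(K:ℝ) ≤ (1/2)*δ := by
            rw [div_le_iff₀ hKpos]
            nlinarith [mul_nonneg hδ0 (sub_nonneg.mpr hc4)]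
          linarith
      _ = (1/2) * ‖βseq t ω - βstar‖ + 2*c₁*sig := by rw [← hδdef]; ring
  -- deterministic conclusion on the good event
  have hdetT : ∀ ω, (∑ i ∈ Sstar, |ε i ω|) ≤ 2 * (K:ℝ) * sig →
      Real.logb 2 (‖βseq 0 ω - βstar‖ / sig) ≤ T →
      ‖βseq T ω - βstar‖ ≤ (1 + 4 * c₁) * sig := by
    intro ω hg hcond
    have hδ0sig : ‖βseq 0 ω - βstar‖ ≤ 2^T * sig := by
      rcases eq_or_lt_of_le (norm_nonneg (βseq 0 ω - βstar)) with h0 | h0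
      · rw [← h0]; positivity
      · have hx0 : 0 < ‖βseq 0 ω - βstar‖ / sig := div_pos h0 hsigpos
        have hh := (Real.logb_le_iff_le_rpow (by norm_num) hx0).mp hcond
        rw [Real.rpow_natCast] at hh
        calc ‖βseq 0 ω - βstar‖ = (‖βseq 0 ω - βstar‖/sig)*sig := by field_simp
          _ ≤ 2^T * sig := mul_le_mul_of_nonneg_right hh (le_of_lt hsigpos)
    have hind : ∀ t, ‖βseq t ω - βstar‖ ≤ (1/2)^t * ‖βseq 0 ω - βstar‖ + 4*c₁*sig := by
      intro t
      induction t with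
      | zero =>
        simp only [pow_zero, one_mul]
        nlinarith [norm_nonneg (βseq 0 ω - βstar)]
      | succ t ih =>
        calc ‖βseq (t+1) ω - βstar‖ ≤ (1/2) * ‖βseq t ω - βstar‖ + 2*c₁*sig := hstep ω hg t
          _ ≤ (1/2)*((1/2)^t * ‖βseq 0 ω - βstar‖ + 4*c₁*sig) + 2*c₁*sig := by linarith
          _ = (1/2)^(t+1) * ‖βseq 0 ω - βstar‖ + 4*c₁*sig := by ring
    have hhalf : ((1:ℝ)/2)^T * (2^T * sig) = sig := by
      rw [← mul_assoc, ← mul_pow]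
      norm_num
    calc ‖βseq T ω - βstar‖ ≤ (1/2)^T * ‖βseq 0 ω - βstar‖ + 4*c₁*sig := hind T
      _ ≤ (1/2)^T * (2^T * sig) + 4*c₁*sig := by
          have : ((1:ℝ)/2)^T ≥ 0 := by positivity
          nlinarith [hδ0sig]
      _ = (1 + 4*c₁) * sig := by rw [hhalf]; ring
  rcases Nat.eq_zero_or_pos T with hT0 | hT1
  · subst hT0
    have huniv : {ω | Real.logb 2 (‖βseq 0 ω - βstar‖ / sig) ≤ (0:ℕ) →
        ‖βseq 0 ω - βstar‖ ≤ (1 + 4 * c₁) * sig} = Set.univ := by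
      ext ω
      simp only [Set.mem_setOf_eq, Set.mem_univ, iff_true]
      intro hcond
      have hδ0sig : ‖βseq 0 ω - βstar‖ ≤ sig := by
        rcases eq_or_lt_of_le (norm_nonneg (βseq 0 ω - βstar)) with h0 | h0
        · rw [← h0]; positivity
        · have hx0 : 0 < ‖βseq 0 ω - βstar‖ / sig := div_pos h0 hsigpos
          have hh := (Real.logb_le_iff_le_rpow (b := 2) (by norm_num) hx0).mp
            (by simpa using hcond)
          simp only [Nat.cast_zero, Real.rpow_zero] at hh
          calc ‖βseq 0 ω - βstar‖ = (‖βseq 0 ω - βstar‖/sig)*sig := by field_simp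
            _ ≤ 1 * sig := mul_le_mul_of_nonneg_right hh (le_of_lt hsigpos)
            _ = sig := one_mul _
      nlinarith [hsigpos]
    rw [huniv]
    simp [measure_univ]
  · -- T ≥ 1 : use Chebyshev
    set Bset := {ω | 2 * ((Sstar.card : ℕ) : ℝ) * sig < ∑ i ∈ Sstar, |ε i ω|} with hBdef
    have hPB : P Bset ≤ ENNReal.ofReal (1/((Sstar.card : ℕ) : ℝ)) :=
      itsm_cheb P n ε σ hσ hindep hL2 hvar Sstar (by rw [hSstarcard]; exact hk0) sig hsigpos hsb
    have hcastK : ((Sstar.card : ℕ) : ℝ) = (K:ℝ) := by rw [hSstarcard]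
    have hsub2 : Bsetᶜ ⊆ {ω | Real.logb 2 (‖βseq 0 ω - βstar‖ / sig) ≤ T →
        ‖βseq T ω - βstar‖ ≤ (1 + 4 * c₁) * sig} := by
      intro ω hω hcond
      have hg : (∑ i ∈ Sstar, |ε i ω|) ≤ 2 * (K:ℝ) * sig := by
        have hω' : ¬ (2 * ((Sstar.card : ℕ) : ℝ) * sig < ∑ i ∈ Sstar, |ε i ω|) := hω
        have := le_of_not_gt hω'
        rwa [hcastK] at this
      exact hdetT ω hg hcond
    have h1K : ENNReal.ofReal (1/((Sstar.card : ℕ) : ℝ))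
        ≤ ENNReal.ofReal ((T:ℝ) * (1 + 4 * c₁) / (4 * c₁ * n)) := by
      refine ENNReal.ofReal_le_ofReal ?_
      rw [hcastK]
      rw [div_le_div_iff₀ hKpos (by positivity)]
      have hT1' : (1:ℝ) ≤ T := by exact_mod_cast hT1
      have hb1 : 4*c₁*(n:ℝ) ≤ (1+4*c₁)*(K:ℝ) := by linarith
      have hb2 : (1:ℝ)*((1+4*c₁)*(K:ℝ)) ≤ (T:ℝ)*((1+4*c₁)*(K:ℝ)) :=
        mul_le_mul_of_nonneg_right hT1' (le_of_lt (mul_pos h4c hKpos))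
      nlinarith [hb1, hb2]
    have hcompl : 1 - P Bset ≤ P Bsetᶜ := by
      refine tsub_le_iff_right.mpr ?_
      calc (1:ℝ≥0∞) = P Set.univ := (measure_univ (μ := P)).symm
        _ = P (Bsetᶜ ∪ Bset) := by rw [Set.compl_union_self]
        _ ≤ P Bsetᶜ + P Bset := measure_union_le _ _
    calc 1 - ENNReal.ofReal ((T:ℝ) * (1 + 4 * c₁) / (4 * c₁ * n))
        ≤ 1 - ENNReal.ofReal (1/((Sstar.card : ℕ) : ℝ)) := tsub_le_tsub_left h1K 1
      _ ≤ 1 - P Bset := tsub_le_tsub_left hPB 1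
      _ ≤ P Bsetᶜ := hcompl
      _ ≤ P {ω | Real.logb 2 (‖βseq 0 ω - βstar‖ / sig) ≤ T →
            ‖βseq T ω - βstar‖ ≤ (1 + 4 * c₁) * sig} := measure_mono hsub2
end
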